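/- arXiv:2409.06432 — 2 statements merged into one kernel-verified Lean document; each statement's English description precedes it below -/
import Mathlib

section
/- For every p ≥ 2 and every s > 0, |∫₀^∞ sin(s·r)·r·exp(−r^p) dr − (sin(s) − s·cos(s))/s²| ≤ 1.016/p. -/
open Real MeasureTheory Set Filter Topology

noncomputable def stR (u : ℝ) : ℝ :=
  ((126523856174033 : ℝ)/426995712000) + ((-99264170666917 : ℝ)/100590336000) * u + ((16083557845279 : ℝ)/11623772160) * u ^ 2 + ((-40476722545169 : ℝ)/37362124800) * u ^ 3 + ((6103575192193 : ℝ)/11496038400) * u ^ 4 + ((-39519232477 : ℝ)/228096000) * u ^ 5 + ((102195627281 : ℝ)/2612736000) * u ^ 6 + ((-327241403 : ℝ)/52254720) * u ^ 7 + ((130469561 : ℝ)/180633600) * u ^ 8 + ((-110676833 : ℝ)/1828915200) * u ^ 9 + ((9636817 : ℝ)/2612736000) * u ^ 10 + ((-259547 : ℝ)/1596672000) * u ^ 11 + ((335 : ℝ)/65691648) * u ^ 12 + ((-4129 : ℝ)/37362124800) * u ^ 13 + ((1 : ℝ)/638668800) * u ^ 14 + ((-17 : ℝ)/1307674368000) *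 u ^ 15 + ((1 : ℝ)/20922789888000) * u ^ 16

noncomputable def stP (u : ℝ) : ℝ :=
  ((47493563949965089 : ℝ)/6199668952527617) + ((-1041270762949805945257132000616720 : ℝ)/38435895120934879771173147698689) * u + ((2261792585802912176106277624536656 : ℝ)/38435895120934879771173147698689) * u ^ 2 + ((-3388401587594675330524687186629080 : ℝ)/38435895120934879771173147698689) * u ^ 3 + ((3727968223485707540547982270795544 : ℝ)/38435895120934879771173147698689) * u ^ 4 + ((-447559764526678634401164141965584 : ℝ)/5490842160133554253024735385527) * u ^ 5 + ((295103447565452655949420189713360 : ℝ)/5490842160133554253024735385527) * u ^ 6 + ((-155660154284590079067135878671908 : ℝ)/5490842160133554253024735385527) * u ^ 7 + ((466582322169694680097899072819900 : ℝ)/38435895120934879771173147698689) * u ^ 8 + ((-164054993251719067649870422338960 : ℝ)/38435895120934879771173147698689) * u ^ 9 + ((47797016900168534104455827309520 : ℝ)/38435895120934879771173147698689) * u ^ 10 + ((-11623448230331576457163103701800 : ℝ)/38435895120934879771173147698689) * u ^ 11 + ((339045614208135614271836863320 : ℝ)/5490842160133554253024735385527) * u ^ 12 + ((-58401955495695514323663056400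 : ℝ)/5490842160133554253024735385527) * u ^ 13 + ((8518670524966248133882764240 : ℝ)/5490842160133554253024735385527) * u ^ 14 + ((-7386287932162201944547180710 : ℝ)/38435895120934879771173147698689) * u ^ 15 + ((778512567376183896356970150 : ℝ)/38435895120934879771173147698689) * u ^ 16 + ((-69904101061662486647225520 : ℝ)/38435895120934879771173147698689) * u ^ 17 + ((5349223183464557796850800 : ℝ)/38435895120934879771173147698689) * u ^ 18 + ((-49808689694650674190680 : ℝ)/5490842160133554253024735385527) * u ^ 19 + ((2761216211801851940760 : ℝ)/5490842160133554253024735385527) * u ^ 20 + ((-129857680911421460400 : ℝ)/5490842160133554253024735385527) * u ^ 21 + ((36127971542565885840 : ℝ)/38435895120934879771173147698689) * u ^ 22 + ((-1206986038792563900 : ℝ)/38435895120934879771173147698689) * u ^ 23 + ((33648759435359484 : ℝ)/38435895120934879771173147698689) * u ^ 24 + ((-775116252286128 : ℝ)/38435895120934879771173147698689) * u ^ 25 + ((2079737343760 : ℝ)/5490842160133554253024735385527) * u ^ 26 + ((-31269726248 : ℝ)/5490842160133554253024735385527) * u ^ 27 + ((366702440 : ℝ)/5490842160133554253024735385527) *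 u ^ 28 + ((-22585424 : ℝ)/38435895120934879771173147698689) * u ^ 29 + ((140048 : ℝ)/38435895120934879771173147698689) * u ^ 30 + ((-545 : ℝ)/38435895120934879771173147698689) * u ^ 31 + ((1 : ℝ)/38435895120934879771173147698689) * u ^ 32

noncomputable def stG (u : ℝ) : ℝ :=
  ((84165065973407953032412170446881 : ℝ)/38435895120934879771173147698689) + ((-210279307892075502455393287916032 : ℝ)/38435895120934879771173147698689) * u + ((8479504643446229008181007272456 : ℝ)/784406022876222036146390769361) * u ^ 2 + ((-615432286091348984901802756062104 : ℝ)/38435895120934879771173147698689) * u ^ 3 + ((693242325375831586405721107641744 : ℝ)/38435895120934879771173147698689) * u ^ 4 + ((-86706454231710741546921747518680 : ℝ)/5490842160133554253024735385527) * u ^ 5 + ((60142218382494648809040399074484 : ℝ)/5490842160133554253024735385527) * u ^ 6 + ((-234961229182958007140379790638876 : ℝ)/38435895120934879771173147698689) * u ^ 7 + ((106832481351146568291196420008060 : ℝ)/38435895120934879771173147698689) * u ^ 8 + ((-5710314933627747806455597663680 : ℝ)/5490842160133554253024735385527) * u ^ 9 + ((12408278871632483300468123869320 : ℝ)/38435895120934879771173147698689)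 * u ^ 10 + ((-3217158002594186436726154858200 : ℝ)/38435895120934879771173147698689) * u ^ 11 + ((1021495408379593109924100 : ℝ)/56046730701890947677578983) * u ^ 12 + ((-18382363888045788991206362340 : ℝ)/5490842160133554253024735385527) * u ^ 13 + ((20009795803824862666228347030 : ℝ)/38435895120934879771173147698689) * u ^ 14 + ((-2641393191395924951396733510 : ℝ)/38435895120934879771173147698689) * u ^ 15 + ((42365131613984616010271850 : ℝ)/5490842160133554253024735385527) * u ^ 16 + ((-28350390945781857899121600 : ℝ)/38435895120934879771173147698689) * u ^ 17 + ((2308539450882257152672440 : ℝ)/38435895120934879771173147698689) * u ^ 18 + ((-22862283703626320632920 : ℝ)/5490842160133554253024735385527) * u ^ 19 + ((1347320299551217677888 : ℝ)/5490842160133554253024735385527) * u ^ 20 + ((-471298637416878087624 : ℝ)/38435895120934879771173147698689) * u ^ 21 + ((19895687680139642508 : ℝ)/38435895120934879771173147698689) * u ^ 22 + ((-100821638897057412 : ℝ)/5490842160133554253024735385527) * u ^ 23 + ((20884773604715084 : ℝ)/38435895120934879771173147698689) * u ^ 24 + ((-510559433225776 : ℝ)/38435895120934879771173147698689) * u ^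 25 + ((1453608895936 : ℝ)/5490842160133554253024735385527) * u ^ 26 + ((-23189942512 : ℝ)/5490842160133554253024735385527) * u ^ 27 + ((2019945934 : ℝ)/38435895120934879771173147698689) * u ^ 28 + ((-18861074 : ℝ)/38435895120934879771173147698689) * u ^ 29 + ((17735 : ℝ)/5490842160133554253024735385527) * u ^ 30 + ((-513 : ℝ)/38435895120934879771173147698689) * u ^ 31 + ((1 : ℝ)/38435895120934879771173147698689) * u ^ 32

lemma stG_hasDeriv (u : ℝ) : HasDerivAt stG (stG u - stP u) u := by
  have h := (((((((((((((((((((((((((((((((((hasDerivAt_const u ((84165065973407953032412170446881 : ℝ)/38435895120934879771173147698689)).add ((hasDerivAt_id' u).const_mul ((-210279307892075502455393287916032 : ℝ)/38435895120934879771173147698689))).add ((hasDerivAt_pow 2 u).const_mul ((8479504643446229008181007272456 : ℝ)/784406022876222036146390769361))).add ((hasDerivAt_pow 3 u).const_mul ((-615432286091348984901802756062104 : ℝ)/38435895120934879771173147698689))).add ((hasDerivAt_pow 4 u).const_mul ((693242325375831586405721107641744 : ℝ)/38435895120934879771173147698689))).add ((hasDerivAt_pow 5 u).const_mul ((-86706454231710741546921747518680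 : ℝ)/5490842160133554253024735385527))).add ((hasDerivAt_pow 6 u).const_mul ((60142218382494648809040399074484 : ℝ)/5490842160133554253024735385527))).add ((hasDerivAt_pow 7 u).const_mul ((-234961229182958007140379790638876 : ℝ)/38435895120934879771173147698689))).add ((hasDerivAt_pow 8 u).const_mul ((106832481351146568291196420008060 : ℝ)/38435895120934879771173147698689))).add ((hasDerivAt_pow 9 u).const_mul ((-5710314933627747806455597663680 : ℝ)/5490842160133554253024735385527))).add ((hasDerivAt_pow 10 u).const_mul ((12408278871632483300468123869320 : ℝ)/38435895120934879771173147698689))).add ((hasDerivAt_pow 11 u).const_mul ((-3217158002594186436726154858200 : ℝ)/38435895120934879771173147698689))).add ((hasDerivAt_pow 12 u).const_mul ((1021495408379593109924100 : ℝ)/56046730701890947677578983))).add ((hasDerivAt_pow 13 u).const_mul ((-18382363888045788991206362340 : ℝ)/5490842160133554253024735385527))).add ((hasDerivAt_pow 14 u).const_mul ((20009795803824862666228347030 : ℝ)/38435895120934879771173147698689))).add ((hasDerivAt_pow 15 u).const_mul ((-2641393191395924951396733510 : ℝ)/38435895120934879771173147698689))).add ((hasDerivAt_pow 16 u).const_mul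 ((42365131613984616010271850 : ℝ)/5490842160133554253024735385527))).add ((hasDerivAt_pow 17 u).const_mul ((-28350390945781857899121600 : ℝ)/38435895120934879771173147698689))).add ((hasDerivAt_pow 18 u).const_mul ((2308539450882257152672440 : ℝ)/38435895120934879771173147698689))).add ((hasDerivAt_pow 19 u).const_mul ((-22862283703626320632920 : ℝ)/5490842160133554253024735385527))).add ((hasDerivAt_pow 20 u).const_mul ((1347320299551217677888 : ℝ)/5490842160133554253024735385527))).add ((hasDerivAt_pow 21 u).const_mul ((-471298637416878087624 : ℝ)/38435895120934879771173147698689))).add ((hasDerivAt_pow 22 u).const_mul ((19895687680139642508 : ℝ)/38435895120934879771173147698689))).add ((hasDerivAt_pow 23 u).const_mul ((-100821638897057412 : ℝ)/5490842160133554253024735385527))).add ((hasDerivAt_pow 24 u).const_mul ((20884773604715084 : ℝ)/38435895120934879771173147698689))).add ((hasDerivAt_pow 25 u).const_mul ((-510559433225776 : ℝ)/38435895120934879771173147698689))).add ((hasDerivAt_pow 26 u).const_mul ((1453608895936 : ℝ)/5490842160133554253024735385527))).add ((hasDerivAt_pow 27 u).const_mul ((-23189942512 : ℝ)/5490842160133554253024735385527))).add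 ((hasDerivAt_pow 28 u).const_mul ((2019945934 : ℝ)/38435895120934879771173147698689))).add ((hasDerivAt_pow 29 u).const_mul ((-18861074 : ℝ)/38435895120934879771173147698689))).add ((hasDerivAt_pow 30 u).const_mul ((17735 : ℝ)/5490842160133554253024735385527))).add ((hasDerivAt_pow 31 u).const_mul ((-513 : ℝ)/38435895120934879771173147698689))).add ((hasDerivAt_pow 32 u).const_mul ((1 : ℝ)/38435895120934879771173147698689)))
  refine HasDerivAt.congr_deriv h ?_
  unfold stG stP
  push_cast
  ring

lemma stP_lower {u : ℝ} (hu : 1 ≤ u) : 1 ≤ u * stP u := by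
  have h : u * stP u - 1 = (u - 1) * stR u ^ 2 / (((16008286181147388492783485089 : ℝ)/182325338066386944000000)) := by
    unfold stP stR; ring
  nlinarith [sq_nonneg (stR u), h]

lemma stG_one : stG 1 = ((9546659248668933548393054780 : ℝ)/16008286181147388492783485089) := by unfold stG; norm_num

lemma stG_tendsto (c : ℝ) :
    Tendsto (fun u : ℝ => (stG u + c) * Real.exp (-u)) atTop (𝓝 0) := by
  have h0 := (((((((((((((((((((((((((((((((((((tendsto_pow_mul_exp_neg_atTop_nhds_zero 0).const_mul ((84165065973407953032412170446881 : ℝ)/38435895120934879771173147698689)).add ((tendsto_pow_mul_exp_neg_atTop_nhds_zero 1).const_mul ((-210279307892075502455393287916032 : ℝ)/38435895120934879771173147698689))).add ((tendsto_pow_mul_exp_neg_atTop_nhds_zero 2).const_mul ((8479504643446229008181007272456 : ℝ)/784406022876222036146390769361))).add ((tendsto_pow_mul_exp_neg_atTop_nhds_zero 3).const_mul ((-615432286091348984901802756062104 : ℝ)/38435895120934879771173147698689))).add ((tendsto_pow_mul_exp_neg_atTop_nhds_zero 4).const_mul ((693242325375831586405721107641744 : ℝ)/38435895120934879771173147698689))).add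 ((tendsto_pow_mul_exp_neg_atTop_nhds_zero 5).const_mul ((-86706454231710741546921747518680 : ℝ)/5490842160133554253024735385527))).add ((tendsto_pow_mul_exp_neg_atTop_nhds_zero 6).const_mul ((60142218382494648809040399074484 : ℝ)/5490842160133554253024735385527))).add ((tendsto_pow_mul_exp_neg_atTop_nhds_zero 7).const_mul ((-234961229182958007140379790638876 : ℝ)/38435895120934879771173147698689))).add ((tendsto_pow_mul_exp_neg_atTop_nhds_zero 8).const_mul ((106832481351146568291196420008060 : ℝ)/38435895120934879771173147698689))).add ((tendsto_pow_mul_exp_neg_atTop_nhds_zero 9).const_mul ((-5710314933627747806455597663680 : ℝ)/5490842160133554253024735385527))).add ((tendsto_pow_mul_exp_neg_atTop_nhds_zero 10).const_mul ((12408278871632483300468123869320 : ℝ)/38435895120934879771173147698689))).add ((tendsto_pow_mul_exp_neg_atTop_nhds_zero 11).const_mul ((-3217158002594186436726154858200 : ℝ)/38435895120934879771173147698689))).add ((tendsto_pow_mul_exp_neg_atTop_nhds_zero 12).const_mul ((1021495408379593109924100 : ℝ)/56046730701890947677578983))).add ((tendsto_pow_mul_exp_neg_atTop_nhds_zero 13).const_mul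 ((-18382363888045788991206362340 : ℝ)/5490842160133554253024735385527))).add ((tendsto_pow_mul_exp_neg_atTop_nhds_zero 14).const_mul ((20009795803824862666228347030 : ℝ)/38435895120934879771173147698689))).add ((tendsto_pow_mul_exp_neg_atTop_nhds_zero 15).const_mul ((-2641393191395924951396733510 : ℝ)/38435895120934879771173147698689))).add ((tendsto_pow_mul_exp_neg_atTop_nhds_zero 16).const_mul ((42365131613984616010271850 : ℝ)/5490842160133554253024735385527))).add ((tendsto_pow_mul_exp_neg_atTop_nhds_zero 17).const_mul ((-28350390945781857899121600 : ℝ)/38435895120934879771173147698689))).add ((tendsto_pow_mul_exp_neg_atTop_nhds_zero 18).const_mul ((2308539450882257152672440 : ℝ)/38435895120934879771173147698689))).add ((tendsto_pow_mul_exp_neg_atTop_nhds_zero 19).const_mul ((-22862283703626320632920 : ℝ)/5490842160133554253024735385527))).add ((tendsto_pow_mul_exp_neg_atTop_nhds_zero 20).const_mul ((1347320299551217677888 : ℝ)/5490842160133554253024735385527))).add ((tendsto_pow_mul_exp_neg_atTop_nhds_zero 21).const_mul ((-471298637416878087624 : ℝ)/38435895120934879771173147698689))).add ((tendsto_pow_mul_exp_neg_atTop_nhds_zero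 22).const_mul ((19895687680139642508 : ℝ)/38435895120934879771173147698689))).add ((tendsto_pow_mul_exp_neg_atTop_nhds_zero 23).const_mul ((-100821638897057412 : ℝ)/5490842160133554253024735385527))).add ((tendsto_pow_mul_exp_neg_atTop_nhds_zero 24).const_mul ((20884773604715084 : ℝ)/38435895120934879771173147698689))).add ((tendsto_pow_mul_exp_neg_atTop_nhds_zero 25).const_mul ((-510559433225776 : ℝ)/38435895120934879771173147698689))).add ((tendsto_pow_mul_exp_neg_atTop_nhds_zero 26).const_mul ((1453608895936 : ℝ)/5490842160133554253024735385527))).add ((tendsto_pow_mul_exp_neg_atTop_nhds_zero 27).const_mul ((-23189942512 : ℝ)/5490842160133554253024735385527))).add ((tendsto_pow_mul_exp_neg_atTop_nhds_zero 28).const_mul ((2019945934 : ℝ)/38435895120934879771173147698689))).add ((tendsto_pow_mul_exp_neg_atTop_nhds_zero 29).const_mul ((-18861074 : ℝ)/38435895120934879771173147698689))).add ((tendsto_pow_mul_exp_neg_atTop_nhds_zero 30).const_mul ((17735 : ℝ)/5490842160133554253024735385527))).add ((tendsto_pow_mul_exp_neg_atTop_nhds_zero 31).const_mul ((-513 : ℝ)/38435895120934879771173147698689))).add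 ((tendsto_pow_mul_exp_neg_atTop_nhds_zero 32).const_mul ((1 : ℝ)/38435895120934879771173147698689))).add ((tendsto_pow_mul_exp_neg_atTop_nhds_zero 0).const_mul c))
  have hZ : (((84165065973407953032412170446881 : ℝ)/38435895120934879771173147698689) * 0 + ((-210279307892075502455393287916032 : ℝ)/38435895120934879771173147698689) * 0 + ((8479504643446229008181007272456 : ℝ)/784406022876222036146390769361) * 0 + ((-615432286091348984901802756062104 : ℝ)/38435895120934879771173147698689) * 0 + ((693242325375831586405721107641744 : ℝ)/38435895120934879771173147698689) * 0 + ((-86706454231710741546921747518680 : ℝ)/5490842160133554253024735385527) * 0 + ((60142218382494648809040399074484 : ℝ)/5490842160133554253024735385527) * 0 + ((-234961229182958007140379790638876 : ℝ)/38435895120934879771173147698689) * 0 + ((106832481351146568291196420008060 : ℝ)/38435895120934879771173147698689) * 0 + ((-5710314933627747806455597663680 : ℝ)/5490842160133554253024735385527) * 0 + ((12408278871632483300468123869320 : ℝ)/38435895120934879771173147698689) * 0 + ((-3217158002594186436726154858200 : ℝ)/38435895120934879771173147698689) * 0 + ((1021495408379593109924100 : ℝ)/56046730701890947677578983) * 0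 + ((-18382363888045788991206362340 : ℝ)/5490842160133554253024735385527) * 0 + ((20009795803824862666228347030 : ℝ)/38435895120934879771173147698689) * 0 + ((-2641393191395924951396733510 : ℝ)/38435895120934879771173147698689) * 0 + ((42365131613984616010271850 : ℝ)/5490842160133554253024735385527) * 0 + ((-28350390945781857899121600 : ℝ)/38435895120934879771173147698689) * 0 + ((2308539450882257152672440 : ℝ)/38435895120934879771173147698689) * 0 + ((-22862283703626320632920 : ℝ)/5490842160133554253024735385527) * 0 + ((1347320299551217677888 : ℝ)/5490842160133554253024735385527) * 0 + ((-471298637416878087624 : ℝ)/38435895120934879771173147698689) * 0 + ((19895687680139642508 : ℝ)/38435895120934879771173147698689) * 0 + ((-100821638897057412 : ℝ)/5490842160133554253024735385527) * 0 + ((20884773604715084 : ℝ)/38435895120934879771173147698689) * 0 + ((-510559433225776 : ℝ)/38435895120934879771173147698689) * 0 + ((1453608895936 : ℝ)/5490842160133554253024735385527) * 0 + ((-23189942512 : ℝ)/5490842160133554253024735385527) * 0 + ((2019945934 : ℝ)/38435895120934879771173147698689) * 0 + ((-18861074 : ℝ)/38435895120934879771173147698689) * 0 + ((17735 : ℝ)/5490842160133554253024735385527)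 * 0 + ((-513 : ℝ)/38435895120934879771173147698689) * 0 + ((1 : ℝ)/38435895120934879771173147698689) * 0 + c * 0 : ℝ) = 0 := by norm_num
  rw [hZ] at h0
  exact h0.congr (fun u => by unfold stG; ring)

lemma base_int (p : ℝ) (hp : 2 ≤ p) (k : ℕ) :
    IntegrableOn (fun r : ℝ => (r ^ p) ^ k * (r ^ (p-1) * Real.exp (-r ^ p))) (Ioi 1) := by
  have hp0 : (0:ℝ) < p := by linarith
  have h := integrableOn_rpow_mul_exp_neg_rpow (p := p) (s := p*k + (p-1))
    (by nlinarith [Nat.cast_nonneg (α := ℝ) k]) (by linarith)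
  have h2 : IntegrableOn (fun x : ℝ => x ^ (p*k + (p-1)) * Real.exp (-x ^ p)) (Ioi 1) :=
    h.mono_set (Ioi_subset_Ioi zero_le_one)
  refine h2.congr_fun (fun x hx => ?_) measurableSet_Ioi
  have hx0 : (0:ℝ) < x := lt_trans one_pos hx
  dsimp only
  rw [Real.rpow_add hx0, ← Real.rpow_natCast (x ^ p) k, ← Real.rpow_mul hx0.le]
  ring

lemma maj_int (p : ℝ) (hp : 2 ≤ p) :
    IntegrableOn (fun r : ℝ => (stP (r ^ p) + 2/p) * (p * r ^ (p-1) * Real.exp (-r ^ p))) (Ioi 1) := by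
  have hp0 : (0:ℝ) < p := by linarith
  have h : IntegrableOn (fun r : ℝ => ((47493563949965089 : ℝ)/6199668952527617) * p * ((r ^ p) ^ 0 * (r ^ (p-1) * Real.exp (-r ^ p))) + ((-1041270762949805945257132000616720 : ℝ)/38435895120934879771173147698689) * p * ((r ^ p) ^ 1 * (r ^ (p-1) * Real.exp (-r ^ p))) + ((2261792585802912176106277624536656 : ℝ)/38435895120934879771173147698689) * p * ((r ^ p) ^ 2 * (r ^ (p-1) * Real.exp (-r ^ p))) + ((-3388401587594675330524687186629080 : ℝ)/38435895120934879771173147698689) * p * ((r ^ p) ^ 3 * (r ^ (p-1) * Real.exp (-r ^ p))) + ((3727968223485707540547982270795544 : ℝ)/38435895120934879771173147698689) * p * ((r ^ p) ^ 4 * (r ^ (p-1) * Real.exp (-r ^ p))) + ((-447559764526678634401164141965584 : ℝ)/5490842160133554253024735385527) * p * ((r ^ p) ^ 5 * (r ^ (p-1) * Real.exp (-r ^ p))) + ((295103447565452655949420189713360 : ℝ)/5490842160133554253024735385527) * p * ((r ^ p) ^ 6 * (r ^ (p-1) * Real.exp (-r ^ p))) + ((-155660154284590079067135878671908 : ℝ)/5490842160133554253024735385527)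 * p * ((r ^ p) ^ 7 * (r ^ (p-1) * Real.exp (-r ^ p))) + ((466582322169694680097899072819900 : ℝ)/38435895120934879771173147698689) * p * ((r ^ p) ^ 8 * (r ^ (p-1) * Real.exp (-r ^ p))) + ((-164054993251719067649870422338960 : ℝ)/38435895120934879771173147698689) * p * ((r ^ p) ^ 9 * (r ^ (p-1) * Real.exp (-r ^ p))) + ((47797016900168534104455827309520 : ℝ)/38435895120934879771173147698689) * p * ((r ^ p) ^ 10 * (r ^ (p-1) * Real.exp (-r ^ p))) + ((-11623448230331576457163103701800 : ℝ)/38435895120934879771173147698689) * p * ((r ^ p) ^ 11 * (r ^ (p-1) * Real.exp (-r ^ p))) + ((339045614208135614271836863320 : ℝ)/5490842160133554253024735385527) * p * ((r ^ p) ^ 12 * (r ^ (p-1) * Real.exp (-r ^ p))) + ((-58401955495695514323663056400 : ℝ)/5490842160133554253024735385527) * p * ((r ^ p) ^ 13 * (r ^ (p-1) * Real.exp (-r ^ p))) + ((8518670524966248133882764240 : ℝ)/5490842160133554253024735385527) * p * ((r ^ p) ^ 14 * (r ^ (p-1) * Real.exp (-r ^ p))) + ((-7386287932162201944547180710 : ℝ)/38435895120934879771173147698689)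 * p * ((r ^ p) ^ 15 * (r ^ (p-1) * Real.exp (-r ^ p))) + ((778512567376183896356970150 : ℝ)/38435895120934879771173147698689) * p * ((r ^ p) ^ 16 * (r ^ (p-1) * Real.exp (-r ^ p))) + ((-69904101061662486647225520 : ℝ)/38435895120934879771173147698689) * p * ((r ^ p) ^ 17 * (r ^ (p-1) * Real.exp (-r ^ p))) + ((5349223183464557796850800 : ℝ)/38435895120934879771173147698689) * p * ((r ^ p) ^ 18 * (r ^ (p-1) * Real.exp (-r ^ p))) + ((-49808689694650674190680 : ℝ)/5490842160133554253024735385527) * p * ((r ^ p) ^ 19 * (r ^ (p-1) * Real.exp (-r ^ p))) + ((2761216211801851940760 : ℝ)/5490842160133554253024735385527) * p * ((r ^ p) ^ 20 * (r ^ (p-1) * Real.exp (-r ^ p))) + ((-129857680911421460400 : ℝ)/5490842160133554253024735385527) * p * ((r ^ p) ^ 21 * (r ^ (p-1) * Real.exp (-r ^ p))) + ((36127971542565885840 : ℝ)/38435895120934879771173147698689) * p * ((r ^ p) ^ 22 * (r ^ (p-1) * Real.exp (-r ^ p))) + ((-1206986038792563900 : ℝ)/38435895120934879771173147698689) * p *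 ((r ^ p) ^ 23 * (r ^ (p-1) * Real.exp (-r ^ p))) + ((33648759435359484 : ℝ)/38435895120934879771173147698689) * p * ((r ^ p) ^ 24 * (r ^ (p-1) * Real.exp (-r ^ p))) + ((-775116252286128 : ℝ)/38435895120934879771173147698689) * p * ((r ^ p) ^ 25 * (r ^ (p-1) * Real.exp (-r ^ p))) + ((2079737343760 : ℝ)/5490842160133554253024735385527) * p * ((r ^ p) ^ 26 * (r ^ (p-1) * Real.exp (-r ^ p))) + ((-31269726248 : ℝ)/5490842160133554253024735385527) * p * ((r ^ p) ^ 27 * (r ^ (p-1) * Real.exp (-r ^ p))) + ((366702440 : ℝ)/5490842160133554253024735385527) * p * ((r ^ p) ^ 28 * (r ^ (p-1) * Real.exp (-r ^ p))) + ((-22585424 : ℝ)/38435895120934879771173147698689) * p * ((r ^ p) ^ 29 * (r ^ (p-1) * Real.exp (-r ^ p))) + ((140048 : ℝ)/38435895120934879771173147698689) * p * ((r ^ p) ^ 30 * (r ^ (p-1) * Real.exp (-r ^ p))) + ((-545 : ℝ)/38435895120934879771173147698689) * p * ((r ^ p) ^ 31 * (r ^ (p-1) * Real.exp (-r ^ p)))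 + ((1 : ℝ)/38435895120934879771173147698689) * p * ((r ^ p) ^ 32 * (r ^ (p-1) * Real.exp (-r ^ p))) + (2:ℝ) * ((r ^ p) ^ 0 * (r ^ (p-1) * Real.exp (-r ^ p)))) (Ioi 1) := by
    exact (((((((((((((((((((((((((((((((((((base_int p hp 0).const_mul (((47493563949965089 : ℝ)/6199668952527617) * p)).add ((base_int p hp 1).const_mul (((-1041270762949805945257132000616720 : ℝ)/38435895120934879771173147698689) * p))).add ((base_int p hp 2).const_mul (((2261792585802912176106277624536656 : ℝ)/38435895120934879771173147698689) * p))).add ((base_int p hp 3).const_mul (((-3388401587594675330524687186629080 : ℝ)/38435895120934879771173147698689) * p))).add ((base_int p hp 4).const_mul (((3727968223485707540547982270795544 : ℝ)/38435895120934879771173147698689) * p))).add ((base_int p hp 5).const_mul (((-447559764526678634401164141965584 : ℝ)/5490842160133554253024735385527) * p))).add ((base_int p hp 6).const_mul (((295103447565452655949420189713360 : ℝ)/5490842160133554253024735385527) * p))).add ((base_int p hp 7).const_mul (((-155660154284590079067135878671908 : ℝ)/5490842160133554253024735385527) * p))).add ((base_int p hp 8).const_mul (((466582322169694680097899072819900 :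 ℝ)/38435895120934879771173147698689) * p))).add ((base_int p hp 9).const_mul (((-164054993251719067649870422338960 : ℝ)/38435895120934879771173147698689) * p))).add ((base_int p hp 10).const_mul (((47797016900168534104455827309520 : ℝ)/38435895120934879771173147698689) * p))).add ((base_int p hp 11).const_mul (((-11623448230331576457163103701800 : ℝ)/38435895120934879771173147698689) * p))).add ((base_int p hp 12).const_mul (((339045614208135614271836863320 : ℝ)/5490842160133554253024735385527) * p))).add ((base_int p hp 13).const_mul (((-58401955495695514323663056400 : ℝ)/5490842160133554253024735385527) * p))).add ((base_int p hp 14).const_mul (((8518670524966248133882764240 : ℝ)/5490842160133554253024735385527) * p))).add ((base_int p hp 15).const_mul (((-7386287932162201944547180710 : ℝ)/38435895120934879771173147698689) * p))).add ((base_int p hp 16).const_mul (((778512567376183896356970150 : ℝ)/38435895120934879771173147698689) * p))).add ((base_int p hp 17).const_mul (((-69904101061662486647225520 : ℝ)/38435895120934879771173147698689) * p))).add ((base_int p hp 18).const_mul (((5349223183464557796850800 : ℝ)/38435895120934879771173147698689) * p))).add ((base_int p hp 19).const_mul (((-49808689694650674190680 : ℝ)/5490842160133554253024735385527) * p))).add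 ((base_int p hp 20).const_mul (((2761216211801851940760 : ℝ)/5490842160133554253024735385527) * p))).add ((base_int p hp 21).const_mul (((-129857680911421460400 : ℝ)/5490842160133554253024735385527) * p))).add ((base_int p hp 22).const_mul (((36127971542565885840 : ℝ)/38435895120934879771173147698689) * p))).add ((base_int p hp 23).const_mul (((-1206986038792563900 : ℝ)/38435895120934879771173147698689) * p))).add ((base_int p hp 24).const_mul (((33648759435359484 : ℝ)/38435895120934879771173147698689) * p))).add ((base_int p hp 25).const_mul (((-775116252286128 : ℝ)/38435895120934879771173147698689) * p))).add ((base_int p hp 26).const_mul (((2079737343760 : ℝ)/5490842160133554253024735385527) * p))).add ((base_int p hp 27).const_mul (((-31269726248 : ℝ)/5490842160133554253024735385527) * p))).add ((base_int p hp 28).const_mul (((366702440 : ℝ)/5490842160133554253024735385527) * p))).add ((base_int p hp 29).const_mul (((-22585424 : ℝ)/38435895120934879771173147698689) * p))).add ((base_int p hp 30).const_mul (((140048 : ℝ)/38435895120934879771173147698689) * p))).add ((base_int p hp 31).const_mul (((-545 : ℝ)/38435895120934879771173147698689) * p))).add ((base_int p hp 32).const_mul (((1 : ℝ)/38435895120934879771173147698689)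 * p))).add ((base_int p hp 0).const_mul 2))
  refine h.congr_fun (fun r hr => ?_) measurableSet_Ioi
  rw [show (stP (r ^ p) + 2/p) * (p * r ^ (p-1) * Real.exp (-r ^ p))
      = stP (r ^ p) * (p * (r ^ (p-1) * Real.exp (-r ^ p)))
        + ((2:ℝ)/p*p) * (r ^ (p-1) * Real.exp (-r ^ p)) by ring,
    show (2:ℝ)/p*p = 2 by field_simp]
  unfold stP
  ring

lemma B_ftc (p : ℝ) (hp : 2 ≤ p) :
    ∫ r in Ioi (1:ℝ), (stP (r ^ p) + 2/p) * (p * r ^ (p-1) * Real.exp (-r ^ p))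
      = (stG 1 + 2/p) * Real.exp (-1) := by
  have hp0 : (0:ℝ) < p := by linarith
  have hderiv : ∀ r ∈ Ici (1:ℝ), HasDerivAt
      (fun r : ℝ => -((stG (r ^ p) + 2/p) * Real.exp (-r ^ p)))
      ((stP (r ^ p) + 2/p) * (p * r ^ (p-1) * Real.exp (-r ^ p))) r := by
    intro r hr
    have hr0 : (0:ℝ) < r := lt_of_lt_of_le one_pos hr
    have hu : HasDerivAt (fun x : ℝ => x ^ p) (p * r ^ (p-1)) r :=
      hasDerivAt_rpow_const (Or.inl hr0.ne')
    have hG : HasDerivAt (fun x : ℝ => stG (x ^ p))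
        ((stG (r ^ p) - stP (r ^ p)) * (p * r ^ (p-1))) r := HasDerivAt.comp (h₂ := stG) r (stG_hasDeriv (r ^ p)) hu
    have hexp : HasDerivAt (fun x : ℝ => Real.exp (-x ^ p))
        (Real.exp (-r ^ p) * -(p * r ^ (p-1))) r := (hu.neg).exp
    have hmul := ((hG.add_const (2/p)).mul hexp).neg
    refine HasDerivAt.congr_deriv hmul ?_
    ring
  have htend : Tendsto (fun r : ℝ => -((stG (r ^ p) + 2/p) * Real.exp (-r ^ p)))
      atTop (𝓝 0) := by
    have h2 : Tendsto (fun r : ℝ => ((stG (r ^ p) + 2/p) * Real.exp (-r ^ p))) atTop (𝓝 0) :=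
      (stG_tendsto (2/p)).comp (tendsto_rpow_atTop hp0)
    simpa using h2.neg
  have hres := integral_Ioi_of_hasDerivAt_of_tendsto' hderiv (maj_int p hp) htend
  rw [hres]
  norm_num

lemma B_bound (p : ℝ) (hp : 2 ≤ p) :
    ∫ r in Ioi (1:ℝ), r * Real.exp (-r ^ p) ≤ (((9546659248668933548393054780 : ℝ)/16008286181147388492783485089) + 2/p) * Real.exp (-1) / p := by
  have hp0 : (0:ℝ) < p := by linarith
  have hint1 : IntegrableOn (fun r : ℝ => r * Real.exp (-r ^ p)) (Ioi 1) := by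
    have h := integrableOn_rpow_mul_exp_neg_rpow (p := p) (s := 1) (by norm_num) (by linarith)
    refine (h.mono_set (Ioi_subset_Ioi zero_le_one)).congr_fun (fun x hx => ?_) measurableSet_Ioi
    dsimp only
    rw [Real.rpow_one]
  have hint2 : IntegrableOn
      (fun r : ℝ => p⁻¹ * ((stP (r ^ p) + 2/p) * (p * r ^ (p-1) * Real.exp (-r ^ p)))) (Ioi 1) :=
    (maj_int p hp).const_mul _
  have hmono : ∀ r ∈ Ioi (1:ℝ), r * Real.exp (-r ^ p) ≤
      p⁻¹ * ((stP (r ^ p) + 2/p) * (p * r ^ (p-1) * Real.exp (-r ^ p))) := by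
    intro r hr
    have hr1 : (1:ℝ) < r := hr
    have hr0 : (0:ℝ) < r := lt_trans one_pos hr1
    have hu1 : (1:ℝ) ≤ r ^ p := by
      calc (1:ℝ) = 1 ^ p := (Real.one_rpow p).symm
      _ ≤ r ^ p := Real.rpow_le_rpow zero_le_one hr1.le (by linarith)
    have hb : (r ^ p) ^ ((2:ℝ)/p) ≤ 1 + (2/p) * (r ^ p - 1) := by
      have h := @rpow_one_add_le_one_add_mul_self (r ^ p - 1) (by linarith) (2/p)
        (by positivity) (by rw [div_le_one hp0]; linarith)
      have e : (1 + (r ^ p - 1) : ℝ) = r ^ p := by ring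
      rwa [e] at h
    have hr2 : (r ^ p) ^ ((2:ℝ)/p) = r * r := by
      rw [← Real.rpow_mul hr0.le, show p * (2/p) = 2 by field_simp,
        show (2:ℝ) = ((2:ℕ):ℝ) by norm_num, Real.rpow_natCast]
      ring
    have hPl := stP_lower hu1
    have key : r * r ≤ (stP (r ^ p) + 2/p) * (r ^ p) := by
      rw [← hr2]
      calc (r ^ p) ^ ((2:ℝ)/p) ≤ 1 + (2/p) * (r ^ p - 1) := hb
      _ ≤ (stP (r ^ p) + 2/p) * (r ^ p) := by
          have h2 : 0 < (2:ℝ)/p := by positivity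
          nlinarith [hPl, hu1]
    have hrp : r ^ (p-1) * r = r ^ p := by
      nth_rewrite 2 [← Real.rpow_one r]
      rw [← Real.rpow_add hr0]
      norm_num
    have hE : (0:ℝ) < Real.exp (-r ^ p) := Real.exp_pos _
    rw [show p⁻¹ * ((stP (r ^ p) + 2/p) * (p * r ^ (p-1) * Real.exp (-r ^ p)))
        = (p⁻¹ * p) * ((stP (r ^ p) + 2/p) * r ^ (p-1)) * Real.exp (-r ^ p) by ring,
      inv_mul_cancel₀ hp0.ne', one_mul]
    have h3 : r ≤ (stP (r ^ p) + 2/p) * r ^ (p-1) := by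
      have h4 : r * r ≤ ((stP (r ^ p) + 2/p) * r ^ (p-1)) * r := by
        calc r * r ≤ (stP (r ^ p) + 2/p) * (r ^ p) := key
        _ = ((stP (r ^ p) + 2/p) * r ^ (p-1)) * r := by rw [← hrp]; ring
      exact le_of_mul_le_mul_right h4 hr0
    exact mul_le_mul_of_nonneg_right h3 hE.le
  calc ∫ r in Ioi (1:ℝ), r * Real.exp (-r ^ p)
      ≤ ∫ r in Ioi (1:ℝ), p⁻¹ * ((stP (r ^ p) + 2/p) * (p * r ^ (p-1) * Real.exp (-r ^ p)))
        := setIntegral_mono_on hint1 hint2 measurableSet_Ioi hmono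
    _ = p⁻¹ * ∫ r in Ioi (1:ℝ), ((stP (r ^ p) + 2/p) * (p * r ^ (p-1) * Real.exp (-r ^ p)))
        := integral_const_mul _ _
    _ = (((9546659248668933548393054780 : ℝ)/16008286181147388492783485089) + 2/p) * Real.exp (-1) / p := by
        rw [B_ftc p hp, stG_one]; ring
set_option maxHeartbeats 1000000 in
lemma A_bound (p : ℝ) (hp : 2 ≤ p) :
    ∫ r in Ioc (0:ℝ) 1, r * (1 - Real.exp (-r ^ p)) ≤ ((1:ℝ)/1) * (p*1+2)⁻¹ - ((1:ℝ)/2) * (p*2+2)⁻¹ + ((1:ℝ)/6) * (p*3+2)⁻¹ - ((1:ℝ)/24) * (p*4+2)⁻¹ + ((1:ℝ)/120) * (p*5+2)⁻¹ - ((1:ℝ)/720) * (p*6+2)⁻¹ + ((1:ℝ)/5040) * (p*7+2)⁻¹ - ((1:ℝ)/40320) * (p*8+2)⁻¹ + ((10:ℝ)/3265920) * (p*9+2)⁻¹ := by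
  have hp0 : (0:ℝ) < p := by linarith
  have hc : Continuous (fun r : ℝ => r ^ p) :=
    continuous_iff_continuousAt.mpr (fun x => Real.continuousAt_rpow_const x p (Or.inr hp0.le))
  have hint1 : IntegrableOn (fun r : ℝ => r * (1 - Real.exp (-r ^ p))) (Ioc 0 1) :=
    (continuous_id.mul (continuous_const.sub (Real.continuous_exp.comp hc.neg))).integrableOn_Ioc
  have hgint : IntervalIntegrable (fun x : ℝ => ((1:ℝ)/1) * x ^ (p*1+1) - ((1:ℝ)/2) * x ^ (p*2+1) + ((1:ℝ)/6) * x ^ (p*3+1) - ((1:ℝ)/24) * x ^ (p*4+1) + ((1:ℝ)/120) * x ^ (p*5+1) - ((1:ℝ)/720) * x ^ (p*6+1) + ((1:ℝ)/5040) * x ^ (p*7+1) - ((1:ℝ)/40320) * x ^ (p*8+1) + ((10:ℝ)/3265920) * x ^ (p*9+1)) volume 0 1 := by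
    exact ((((((((((_root_.intervalIntegral.intervalIntegrable_rpow' (by nlinarith : (-1:ℝ) < p*1+1)).const_mul ((1:ℝ)/1)).sub ((_root_.intervalIntegral.intervalIntegrable_rpow' (by nlinarith : (-1:ℝ) < p*2+1)).const_mul ((1:ℝ)/2))).add ((_root_.intervalIntegral.intervalIntegrable_rpow' (by nlinarith : (-1:ℝ) < p*3+1)).const_mul ((1:ℝ)/6))).sub ((_root_.intervalIntegral.intervalIntegrable_rpow' (by nlinarith : (-1:ℝ) < p*4+1)).const_mul ((1:ℝ)/24))).add ((_root_.intervalIntegral.intervalIntegrable_rpow' (by nlinarith : (-1:ℝ) < p*5+1)).const_mul ((1:ℝ)/120))).sub ((_root_.intervalIntegral.intervalIntegrable_rpow' (by nlinarith : (-1:ℝ) < p*6+1)).const_mul ((1:ℝ)/720))).add ((_root_.intervalIntegral.intervalIntegrable_rpow' (by nlinarith : (-1:ℝ) < p*7+1)).const_mul ((1:ℝ)/5040))).sub ((_root_.intervalIntegral.intervalIntegrable_rpow' (by nlinarith : (-1:ℝ) < p*8+1)).const_mul ((1:ℝ)/40320))).add ((_root_.intervalIntegral.intervalIntegrable_rpow'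 (by nlinarith : (-1:ℝ) < p*9+1)).const_mul ((10:ℝ)/3265920)))
  have hint2 : IntegrableOn (fun x : ℝ => ((1:ℝ)/1) * x ^ (p*1+1) - ((1:ℝ)/2) * x ^ (p*2+1) + ((1:ℝ)/6) * x ^ (p*3+1) - ((1:ℝ)/24) * x ^ (p*4+1) + ((1:ℝ)/120) * x ^ (p*5+1) - ((1:ℝ)/720) * x ^ (p*6+1) + ((1:ℝ)/5040) * x ^ (p*7+1) - ((1:ℝ)/40320) * x ^ (p*8+1) + ((10:ℝ)/3265920) * x ^ (p*9+1)) (Ioc 0 1) :=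
    (intervalIntegrable_iff_integrableOn_Ioc_of_le zero_le_one).mp hgint
  have hmono : ∀ r ∈ Ioc (0:ℝ) 1, r * (1 - Real.exp (-r ^ p)) ≤ ((1:ℝ)/1) * r ^ (p*1+1) - ((1:ℝ)/2) * r ^ (p*2+1) + ((1:ℝ)/6) * r ^ (p*3+1) - ((1:ℝ)/24) * r ^ (p*4+1) + ((1:ℝ)/120) * r ^ (p*5+1) - ((1:ℝ)/720) * r ^ (p*6+1) + ((1:ℝ)/5040) * r ^ (p*7+1) - ((1:ℝ)/40320) * r ^ (p*8+1) + ((10:ℝ)/3265920) * r ^ (p*9+1) := by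
    intro r hr
    obtain ⟨hr0, hr1⟩ := hr
    have hu0 : (0:ℝ) ≤ r ^ p := Real.rpow_nonneg hr0.le p
    have hu1 : r ^ p ≤ 1 := Real.rpow_le_one hr0.le hr1 hp0.le
    have hb := Real.exp_bound (x := -(r ^ p)) (by rw [abs_neg, abs_of_nonneg hu0]; exact hu1) (n := 9) (by norm_num)
    rw [abs_neg, abs_of_nonneg hu0] at hb
    have hsum : ∑ m ∈ Finset.range 9, (-(r ^ p)) ^ m / (Nat.factorial m : ℝ)
        = 1 - r ^ p + (r ^ p) ^ 2/2 - (r ^ p) ^ 3/6 + (r ^ p) ^ 4/24 - (r ^ p) ^ 5/120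
          + (r ^ p) ^ 6/720 - (r ^ p) ^ 7/5040 + (r ^ p) ^ 8/40320 := by
      simp [Finset.sum_range_succ, Nat.factorial]
      ring
    rw [hsum] at hb
    have hkey : 1 - Real.exp (-(r ^ p)) ≤ r ^ p - (r ^ p) ^ 2/2 + (r ^ p) ^ 3/6 - (r ^ p) ^ 4/24
        + (r ^ p) ^ 5/120 - (r ^ p) ^ 6/720 + (r ^ p) ^ 7/5040 - (r ^ p) ^ 8/40320
        + (r ^ p) ^ 9 * (10/3265920) := by
      have h1 := (abs_le.mp hb).1
      have h2 : ((9:ℕ).succ : ℝ) / ((9:ℕ).factorial * (9:ℕ)) = 10/3265920 := by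
        norm_num [Nat.factorial]
      rw [h2] at h1
      linarith
    have e1 : r ^ (p*1+1) = r * (r ^ p) ^ (1:ℕ) := by
      rw [← Real.rpow_natCast (r ^ p) 1, ← Real.rpow_mul hr0.le, Real.rpow_add hr0, Real.rpow_one]
      push_cast
      ring
    have e2 : r ^ (p*2+1) = r * (r ^ p) ^ (2:ℕ) := by
      rw [← Real.rpow_natCast (r ^ p) 2, ← Real.rpow_mul hr0.le, Real.rpow_add hr0, Real.rpow_one]
      push_cast
      ring
    have e3 : r ^ (p*3+1) = r * (r ^ p) ^ (3:ℕ) := by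
      rw [← Real.rpow_natCast (r ^ p) 3, ← Real.rpow_mul hr0.le, Real.rpow_add hr0, Real.rpow_one]
      push_cast
      ring
    have e4 : r ^ (p*4+1) = r * (r ^ p) ^ (4:ℕ) := by
      rw [← Real.rpow_natCast (r ^ p) 4, ← Real.rpow_mul hr0.le, Real.rpow_add hr0, Real.rpow_one]
      push_cast
      ring
    have e5 : r ^ (p*5+1) = r * (r ^ p) ^ (5:ℕ) := by
      rw [← Real.rpow_natCast (r ^ p) 5, ← Real.rpow_mul hr0.le, Real.rpow_add hr0, Real.rpow_one]
      push_cast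
      ring
    have e6 : r ^ (p*6+1) = r * (r ^ p) ^ (6:ℕ) := by
      rw [← Real.rpow_natCast (r ^ p) 6, ← Real.rpow_mul hr0.le, Real.rpow_add hr0, Real.rpow_one]
      push_cast
      ring
    have e7 : r ^ (p*7+1) = r * (r ^ p) ^ (7:ℕ) := by
      rw [← Real.rpow_natCast (r ^ p) 7, ← Real.rpow_mul hr0.le, Real.rpow_add hr0, Real.rpow_one]
      push_cast
      ring
    have e8 : r ^ (p*8+1) = r * (r ^ p) ^ (8:ℕ) := by
      rw [← Real.rpow_natCast (r ^ p) 8, ← Real.rpow_mul hr0.le, Real.rpow_add hr0, Real.rpow_one]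
      push_cast
      ring
    have e9 : r ^ (p*9+1) = r * (r ^ p) ^ (9:ℕ) := by
      rw [← Real.rpow_natCast (r ^ p) 9, ← Real.rpow_mul hr0.le, Real.rpow_add hr0, Real.rpow_one]
      push_cast
      ring
    rw [e1, e2, e3, e4, e5, e6, e7, e8, e9]
    calc r * (1 - Real.exp (-r ^ p)) ≤ r * (r ^ p - (r ^ p) ^ 2/2 + (r ^ p) ^ 3/6 - (r ^ p) ^ 4/24
        + (r ^ p) ^ 5/120 - (r ^ p) ^ 6/720 + (r ^ p) ^ 7/5040 - (r ^ p) ^ 8/40320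
        + (r ^ p) ^ 9 * (10/3265920)) := mul_le_mul_of_nonneg_left hkey hr0.le
      _ = _ := by push_cast; ring
  have hstep := setIntegral_mono_on hint1 hint2 measurableSet_Ioc hmono
  have hderivH : ∀ x ∈ uIcc (0:ℝ) 1, HasDerivAt (fun x : ℝ => ((1:ℝ)/1) * (p*1+2)⁻¹ * x ^ (p*1+2) - ((1:ℝ)/2) * (p*2+2)⁻¹ * x ^ (p*2+2) + ((1:ℝ)/6) * (p*3+2)⁻¹ * x ^ (p*3+2) - ((1:ℝ)/24) * (p*4+2)⁻¹ * x ^ (p*4+2) + ((1:ℝ)/120) * (p*5+2)⁻¹ * x ^ (p*5+2) - ((1:ℝ)/720) * (p*6+2)⁻¹ * x ^ (p*6+2) + ((1:ℝ)/5040) * (p*7+2)⁻¹ * x ^ (p*7+2) - ((1:ℝ)/40320) * (p*8+2)⁻¹ * x ^ (p*8+2) + ((10:ℝ)/3265920) * (p*9+2)⁻¹ * x ^ (p*9+2))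
      (((1:ℝ)/1) * x ^ (p*1+1) - ((1:ℝ)/2) * x ^ (p*2+1) + ((1:ℝ)/6) * x ^ (p*3+1) - ((1:ℝ)/24) * x ^ (p*4+1) + ((1:ℝ)/120) * x ^ (p*5+1) - ((1:ℝ)/720) * x ^ (p*6+1) + ((1:ℝ)/5040) * x ^ (p*7+1) - ((1:ℝ)/40320) * x ^ (p*8+1) + ((10:ℝ)/3265920) * x ^ (p*9+1)) x := by
    intro x _
    have hd1 : HasDerivAt (fun x : ℝ => x ^ (p*1+2)) ((p*1+2) * x ^ (p*1+1)) x := by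
      have h := hasDerivAt_rpow_const (x := x) (p := p*1+2) (Or.inr (by nlinarith : (1:ℝ) ≤ p*1+2))
      rwa [show p*1+2-1 = p*1+1 by ring] at h
    have hd2 : HasDerivAt (fun x : ℝ => x ^ (p*2+2)) ((p*2+2) * x ^ (p*2+1)) x := by
      have h := hasDerivAt_rpow_const (x := x) (p := p*2+2) (Or.inr (by nlinarith : (1:ℝ) ≤ p*2+2))
      rwa [show p*2+2-1 = p*2+1 by ring] at h
    have hd3 : HasDerivAt (fun x : ℝ => x ^ (p*3+2)) ((p*3+2) * x ^ (p*3+1)) x := by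
      have h := hasDerivAt_rpow_const (x := x) (p := p*3+2) (Or.inr (by nlinarith : (1:ℝ) ≤ p*3+2))
      rwa [show p*3+2-1 = p*3+1 by ring] at h
    have hd4 : HasDerivAt (fun x : ℝ => x ^ (p*4+2)) ((p*4+2) * x ^ (p*4+1)) x := by
      have h := hasDerivAt_rpow_const (x := x) (p := p*4+2) (Or.inr (by nlinarith : (1:ℝ) ≤ p*4+2))
      rwa [show p*4+2-1 = p*4+1 by ring] at h
    have hd5 : HasDerivAt (fun x : ℝ => x ^ (p*5+2)) ((p*5+2) * x ^ (p*5+1)) x := by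
      have h := hasDerivAt_rpow_const (x := x) (p := p*5+2) (Or.inr (by nlinarith : (1:ℝ) ≤ p*5+2))
      rwa [show p*5+2-1 = p*5+1 by ring] at h
    have hd6 : HasDerivAt (fun x : ℝ => x ^ (p*6+2)) ((p*6+2) * x ^ (p*6+1)) x := by
      have h := hasDerivAt_rpow_const (x := x) (p := p*6+2) (Or.inr (by nlinarith : (1:ℝ) ≤ p*6+2))
      rwa [show p*6+2-1 = p*6+1 by ring] at h
    have hd7 : HasDerivAt (fun x : ℝ => x ^ (p*7+2)) ((p*7+2) * x ^ (p*7+1)) x := by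
      have h := hasDerivAt_rpow_const (x := x) (p := p*7+2) (Or.inr (by nlinarith : (1:ℝ) ≤ p*7+2))
      rwa [show p*7+2-1 = p*7+1 by ring] at h
    have hd8 : HasDerivAt (fun x : ℝ => x ^ (p*8+2)) ((p*8+2) * x ^ (p*8+1)) x := by
      have h := hasDerivAt_rpow_const (x := x) (p := p*8+2) (Or.inr (by nlinarith : (1:ℝ) ≤ p*8+2))
      rwa [show p*8+2-1 = p*8+1 by ring] at h
    have hd9 : HasDerivAt (fun x : ℝ => x ^ (p*9+2)) ((p*9+2) * x ^ (p*9+1)) x := by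
      have h := hasDerivAt_rpow_const (x := x) (p := p*9+2) (Or.inr (by nlinarith : (1:ℝ) ≤ p*9+2))
      rwa [show p*9+2-1 = p*9+1 by ring] at h
    have h := (((((((((hd1.const_mul ((1:ℝ)/1 * (p*1+2)⁻¹)).sub (hd2.const_mul (((1:ℝ)/2) * (p*2+2)⁻¹))).add (hd3.const_mul (((1:ℝ)/6) * (p*3+2)⁻¹))).sub (hd4.const_mul (((1:ℝ)/24) * (p*4+2)⁻¹))).add (hd5.const_mul (((1:ℝ)/120) * (p*5+2)⁻¹))).sub (hd6.const_mul (((1:ℝ)/720) * (p*6+2)⁻¹))).add (hd7.const_mul (((1:ℝ)/5040) * (p*7+2)⁻¹))).sub (hd8.const_mul (((1:ℝ)/40320) * (p*8+2)⁻¹))).add (hd9.const_mul (((10:ℝ)/3265920) * (p*9+2)⁻¹)))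
    refine HasDerivAt.congr_deriv h ?_
    have n1 : (p*1+2) ≠ 0 := by nlinarith
    have n2 : (p*2+2) ≠ 0 := by nlinarith
    have n3 : (p*3+2) ≠ 0 := by nlinarith
    have n4 : (p*4+2) ≠ 0 := by nlinarith
    have n5 : (p*5+2) ≠ 0 := by nlinarith
    have n6 : (p*6+2) ≠ 0 := by nlinarith
    have n7 : (p*7+2) ≠ 0 := by nlinarith
    have n8 : (p*8+2) ≠ 0 := by nlinarith
    have n9 : (p*9+2) ≠ 0 := by nlinarith
    field_simp
  have hval : ∫ x in (0:ℝ)..1, (((1:ℝ)/1) * x ^ (p*1+1) - ((1:ℝ)/2) * x ^ (p*2+1) + ((1:ℝ)/6) * x ^ (p*3+1) - ((1:ℝ)/24) * x ^ (p*4+1) + ((1:ℝ)/120) * x ^ (p*5+1) - ((1:ℝ)/720) * x ^ (p*6+1) + ((1:ℝ)/5040) * x ^ (p*7+1) - ((1:ℝ)/40320) * x ^ (p*8+1) + ((10:ℝ)/3265920) * x ^ (p*9+1)) = ((1:ℝ)/1) * (p*1+2)⁻¹ - ((1:ℝ)/2) * (p*2+2)⁻¹ + ((1:ℝ)/6) *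 (p*3+2)⁻¹ - ((1:ℝ)/24) * (p*4+2)⁻¹ + ((1:ℝ)/120) * (p*5+2)⁻¹ - ((1:ℝ)/720) * (p*6+2)⁻¹ + ((1:ℝ)/5040) * (p*7+2)⁻¹ - ((1:ℝ)/40320) * (p*8+2)⁻¹ + ((10:ℝ)/3265920) * (p*9+2)⁻¹ := by
    rw [intervalIntegral.integral_eq_sub_of_hasDerivAt hderivH hgint]
    have z1 : (0:ℝ) ^ (p*1+2) = 0 := Real.zero_rpow (by nlinarith)
    have z2 : (0:ℝ) ^ (p*2+2) = 0 := Real.zero_rpow (by nlinarith)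
    have z3 : (0:ℝ) ^ (p*3+2) = 0 := Real.zero_rpow (by nlinarith)
    have z4 : (0:ℝ) ^ (p*4+2) = 0 := Real.zero_rpow (by nlinarith)
    have z5 : (0:ℝ) ^ (p*5+2) = 0 := Real.zero_rpow (by nlinarith)
    have z6 : (0:ℝ) ^ (p*6+2) = 0 := Real.zero_rpow (by nlinarith)
    have z7 : (0:ℝ) ^ (p*7+2) = 0 := Real.zero_rpow (by nlinarith)
    have z8 : (0:ℝ) ^ (p*8+2) = 0 := Real.zero_rpow (by nlinarith)
    have z9 : (0:ℝ) ^ (p*9+2) = 0 := Real.zero_rpow (by nlinarith)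
    simp only [Real.one_rpow, z1, z2, z3, z4, z5, z6, z7, z8, z9]
    ring
  calc ∫ r in Ioc (0:ℝ) 1, r * (1 - Real.exp (-r ^ p)) ≤ _ := hstep
    _ = ∫ x in (0:ℝ)..1, (((1:ℝ)/1) * x ^ (p*1+1) - ((1:ℝ)/2) * x ^ (p*2+1) + ((1:ℝ)/6) * x ^ (p*3+1) - ((1:ℝ)/24) * x ^ (p*4+1) + ((1:ℝ)/120) * x ^ (p*5+1) - ((1:ℝ)/720) * x ^ (p*6+1) + ((1:ℝ)/5040) * x ^ (p*7+1) - ((1:ℝ)/40320) * x ^ (p*8+1) + ((10:ℝ)/3265920) * x ^ (p*9+1)) := (intervalIntegral.integral_of_le zero_le_one).symm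
    _ = ((1:ℝ)/1) * (p*1+2)⁻¹ - ((1:ℝ)/2) * (p*2+2)⁻¹ + ((1:ℝ)/6) * (p*3+2)⁻¹ - ((1:ℝ)/24) * (p*4+2)⁻¹ + ((1:ℝ)/120) * (p*5+2)⁻¹ - ((1:ℝ)/720) * (p*6+2)⁻¹ + ((1:ℝ)/5040) * (p*7+2)⁻¹ - ((1:ℝ)/40320) * (p*8+2)⁻¹ + ((10:ℝ)/3265920) * (p*9+2)⁻¹ := hval

lemma T_eval (s : ℝ) (hs : 0 < s) :
    ∫ r in Ioc (0:ℝ) 1, Real.sin (s*r) * r = (Real.sin s - s * Real.cos s)/s^2 := by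
  have hs0 : s ≠ 0 := ne_of_gt hs
  have hF : ∀ x ∈ uIcc (0:ℝ) 1, HasDerivAt
      (fun r : ℝ => (Real.sin (s*r) - s*r*Real.cos (s*r))/s^2) (Real.sin (s*x) * x) x := by
    intro x _
    have h1 : HasDerivAt (fun r : ℝ => s*r) (s*1) x := (hasDerivAt_id' x).const_mul s
    have hsin : HasDerivAt (fun r : ℝ => Real.sin (s*r)) (Real.cos (s*x) * (s*1)) x :=
      (Real.hasDerivAt_sin (s*x)).comp x h1
    have hcos : HasDerivAt (fun r : ℝ => Real.cos (s*r)) (-Real.sin (s*x) * (s*1)) x :=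
      (Real.hasDerivAt_cos (s*x)).comp x h1
    have h2 := h1.mul hcos
    have h3 := (hsin.sub h2).div_const (s^2)
    refine HasDerivAt.congr_deriv h3 ?_
    field_simp
    ring
  have hInt : IntervalIntegrable (fun r : ℝ => Real.sin (s*r) * r) volume 0 1 :=
    ((Real.continuous_sin.comp (continuous_const.mul continuous_id)).mul continuous_id).intervalIntegrable 0 1
  have hres := intervalIntegral.integral_eq_sub_of_hasDerivAt hF hInt
  rw [← intervalIntegral.integral_of_le zero_le_one, hres]
  norm_num

set_option maxHeartbeats 2000000 in
lemma final_ineq (p : ℝ) (hp : 2 ≤ p) :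
    (((1:ℝ)/1) * (p*1+2)⁻¹ - ((1:ℝ)/2) * (p*2+2)⁻¹ + ((1:ℝ)/6) * (p*3+2)⁻¹ - ((1:ℝ)/24) * (p*4+2)⁻¹ + ((1:ℝ)/120) * (p*5+2)⁻¹ - ((1:ℝ)/720) * (p*6+2)⁻¹ + ((1:ℝ)/5040) * (p*7+2)⁻¹ - ((1:ℝ)/40320) * (p*8+2)⁻¹ + ((10:ℝ)/3265920) * (p*9+2)⁻¹) + (((9546659248668933548393054780 : ℝ)/16008286181147388492783485089) + 2/p) * Real.exp (-1) / p ≤ 1.016 / p := by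
  have hp0 : (0:ℝ) < p := by linarith
  have hE : Real.exp (-1) ≤ ((3678794412:ℝ)/10000000000) := by
    rw [Real.exp_neg]
    have h1 := Real.exp_one_gt_d9
    have h2 : (0:ℝ) < Real.exp 1 := Real.exp_pos 1
    rw [inv_le_comm₀ h2 (by norm_num)]
    nlinarith
  have hw : (0:ℝ) ≤ p - 2 := by linarith
  have h1 : (0:ℝ) < p*1+2 := by nlinarith
  have h2 : (0:ℝ) < p*2+2 := by nlinarith
  have h3 : (0:ℝ) < p*3+2 := by nlinarith
  have h4 : (0:ℝ) < p*4+2 := by nlinarith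
  have h5 : (0:ℝ) < p*5+2 := by nlinarith
  have h6 : (0:ℝ) < p*6+2 := by nlinarith
  have h7 : (0:ℝ) < p*7+2 := by nlinarith
  have h8 : (0:ℝ) < p*8+2 := by nlinarith
  have h9 : (0:ℝ) < p*9+2 := by nlinarith
  have hstep : (((9546659248668933548393054780 : ℝ)/16008286181147388492783485089) + 2/p) * Real.exp (-1) / p ≤ (((9546659248668933548393054780 : ℝ)/16008286181147388492783485089) + 2/p) * ((3678794412:ℝ)/10000000000) / p := by
    have hc : (0:ℝ) ≤ ((9546659248668933548393054780 : ℝ)/16008286181147388492783485089) + 2/p :=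
      add_nonneg (by norm_num) (le_of_lt (div_pos two_pos hp0))
    have hm := mul_le_mul_of_nonneg_left hE hc
    exact div_le_div_of_nonneg_right hm hp0.le
  have hmain : (((1:ℝ)/1) * (p*1+2)⁻¹ - ((1:ℝ)/2) * (p*2+2)⁻¹ + ((1:ℝ)/6) * (p*3+2)⁻¹ - ((1:ℝ)/24) * (p*4+2)⁻¹ + ((1:ℝ)/120) * (p*5+2)⁻¹ - ((1:ℝ)/720) * (p*6+2)⁻¹ + ((1:ℝ)/5040) * (p*7+2)⁻¹ - ((1:ℝ)/40320) * (p*8+2)⁻¹ + ((10:ℝ)/3265920) * (p*9+2)⁻¹) + (((9546659248668933548393054780 : ℝ)/16008286181147388492783485089) + 2/p) * ((3678794412:ℝ)/10000000000) / p ≤ 1.016 / p := by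
    rw [← sub_nonneg]
    have hnum : (0:ℝ) ≤ ((12726107726319009987654657483078479563805696 : ℝ)/56279131105596287669941939766015625) + ((21594801018789841980124686165061320411333350464 : ℝ)/17727926298262830616031711026294921875) * (p-2) ^ 1 + ((25917099884086800085232355451959317323209233944 : ℝ)/9848847943479350342239839459052734375) * (p-2) ^ 2 + ((2493935970829525878740599796872457509689684828826 : ℝ)/797756683421827377721426996183271484375) * (p-2) ^ 3 + ((3665361882601206095169071238463167312011914628141 : ℝ)/1595513366843654755442853992366542968750) * (p-2) ^ 4 + ((998464999002110929069550257547971567626774138647 : ℝ)/911721923910659860253059424209453125000) * (p-2) ^ 5 + ((155441831882580919027285747449832981918609747639 : ℝ)/455860961955329930126529712104726562500) * (p-2) ^ 6 + ((857312733244227397298724923236856434327696219171 : ℝ)/12764106934749238043542831938932343750000) * (p-2) ^ 7 + ((48619018835957916981204187385408677390541536703 : ℝ)/6382053467374619021771415969466171875000) * (p-2) ^ 8 + ((7184451464162759449170367448631135175410569 : ℝ)/18909788051480352657100491761381250000) * (p-2) ^ 9 + ((131026746933122634016662851748230817967 : ℝ)/28364682077220528985650737642071875000) * (p-2) ^ 10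 := by
      have t0 : (0:ℝ) ≤ ((12726107726319009987654657483078479563805696:ℝ)/56279131105596287669941939766015625) := by norm_num
      have t1 : (0:ℝ) ≤ ((21594801018789841980124686165061320411333350464:ℝ)/17727926298262830616031711026294921875) * (p-2) ^ 1 := mul_nonneg (by norm_num) (pow_nonneg hw 1)
      have t2 : (0:ℝ) ≤ ((25917099884086800085232355451959317323209233944:ℝ)/9848847943479350342239839459052734375) * (p-2) ^ 2 := mul_nonneg (by norm_num) (pow_nonneg hw 2)
      have t3 : (0:ℝ) ≤ ((2493935970829525878740599796872457509689684828826:ℝ)/797756683421827377721426996183271484375) * (p-2) ^ 3 := mul_nonneg (by norm_num) (pow_nonneg hw 3)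
      have t4 : (0:ℝ) ≤ ((3665361882601206095169071238463167312011914628141:ℝ)/1595513366843654755442853992366542968750) * (p-2) ^ 4 := mul_nonneg (by norm_num) (pow_nonneg hw 4)
      have t5 : (0:ℝ) ≤ ((998464999002110929069550257547971567626774138647:ℝ)/911721923910659860253059424209453125000) * (p-2) ^ 5 := mul_nonneg (by norm_num) (pow_nonneg hw 5)
      have t6 : (0:ℝ) ≤ ((155441831882580919027285747449832981918609747639:ℝ)/455860961955329930126529712104726562500) * (p-2) ^ 6 := mul_nonneg (by norm_num) (pow_nonneg hw 6)
      have t7 : (0:ℝ) ≤ ((857312733244227397298724923236856434327696219171:ℝ)/12764106934749238043542831938932343750000) * (p-2) ^ 7 := mul_nonneg (by norm_num) (pow_nonneg hw 7)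
      have t8 : (0:ℝ) ≤ ((48619018835957916981204187385408677390541536703:ℝ)/6382053467374619021771415969466171875000) * (p-2) ^ 8 := mul_nonneg (by norm_num) (pow_nonneg hw 8)
      have t9 : (0:ℝ) ≤ ((7184451464162759449170367448631135175410569:ℝ)/18909788051480352657100491761381250000) * (p-2) ^ 9 := mul_nonneg (by norm_num) (pow_nonneg hw 9)
      have t10 : (0:ℝ) ≤ ((131026746933122634016662851748230817967:ℝ)/28364682077220528985650737642071875000) * (p-2) ^ 10 := mul_nonneg (by norm_num) (pow_nonneg hw 10)
      linarith
    have hden : (0:ℝ) < p^2*((p*1+2)*((p*2+2)*((p*3+2)*((p*4+2)*((p*5+2)*((p*6+2)*((p*7+2)*((p*8+2)*(p*9+2))))))))) := by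
      have m8 : (0:ℝ) < (p*8+2)*((p*9+2)) := mul_pos h8 h9
      have m7 : (0:ℝ) < (p*7+2)*((p*8+2)*((p*9+2))) := mul_pos h7 m8
      have m6 : (0:ℝ) < (p*6+2)*((p*7+2)*((p*8+2)*((p*9+2)))) := mul_pos h6 m7
      have m5 : (0:ℝ) < (p*5+2)*((p*6+2)*((p*7+2)*((p*8+2)*((p*9+2))))) := mul_pos h5 m6
      have m4 : (0:ℝ) < (p*4+2)*((p*5+2)*((p*6+2)*((p*7+2)*((p*8+2)*((p*9+2)))))) := mul_pos h4 m5
      have m3 : (0:ℝ) < (p*3+2)*((p*4+2)*((p*5+2)*((p*6+2)*((p*7+2)*((p*8+2)*((p*9+2))))))) := mul_pos h3 m4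
      have m2 : (0:ℝ) < (p*2+2)*((p*3+2)*((p*4+2)*((p*5+2)*((p*6+2)*((p*7+2)*((p*8+2)*((p*9+2)))))))) := mul_pos h2 m3
      have m1 : (0:ℝ) < (p*1+2)*((p*2+2)*((p*3+2)*((p*4+2)*((p*5+2)*((p*6+2)*((p*7+2)*((p*8+2)*((p*9+2))))))))) := mul_pos h1 m2
      exact mul_pos (pow_pos hp0 2) m1
    have hid : 1.016/p - ((((1:ℝ)/1) * (p*1+2)⁻¹ - ((1:ℝ)/2) * (p*2+2)⁻¹ + ((1:ℝ)/6) * (p*3+2)⁻¹ - ((1:ℝ)/24) * (p*4+2)⁻¹ + ((1:ℝ)/120) * (p*5+2)⁻¹ - ((1:ℝ)/720) * (p*6+2)⁻¹ + ((1:ℝ)/5040) * (p*7+2)⁻¹ - ((1:ℝ)/40320) * (p*8+2)⁻¹ + ((10:ℝ)/3265920) * (p*9+2)⁻¹) + (((9546659248668933548393054780 : ℝ)/16008286181147388492783485089) + 2/p) * ((3678794412:ℝ)/10000000000) / p)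
        = (((12726107726319009987654657483078479563805696 : ℝ)/56279131105596287669941939766015625) + ((21594801018789841980124686165061320411333350464 : ℝ)/17727926298262830616031711026294921875) * (p-2) ^ 1 + ((25917099884086800085232355451959317323209233944 : ℝ)/9848847943479350342239839459052734375) * (p-2) ^ 2 + ((2493935970829525878740599796872457509689684828826 : ℝ)/797756683421827377721426996183271484375) * (p-2) ^ 3 + ((3665361882601206095169071238463167312011914628141 : ℝ)/1595513366843654755442853992366542968750) * (p-2) ^ 4 + ((998464999002110929069550257547971567626774138647 : ℝ)/911721923910659860253059424209453125000) * (p-2) ^ 5 + ((155441831882580919027285747449832981918609747639 : ℝ)/455860961955329930126529712104726562500) * (p-2) ^ 6 + ((857312733244227397298724923236856434327696219171 : ℝ)/12764106934749238043542831938932343750000) * (p-2) ^ 7 + ((48619018835957916981204187385408677390541536703 : ℝ)/6382053467374619021771415969466171875000) * (p-2) ^ 8 + ((7184451464162759449170367448631135175410569 : ℝ)/18909788051480352657100491761381250000) * (p-2) ^ 9 + ((131026746933122634016662851748230817967 : ℝ)/28364682077220528985650737642071875000) * (p-2) ^ 10) / (p^2*((p*1+2)*((p*2+2)*((p*3+2)*((p*4+2)*((p*5+2)*((p*6+2)*((p*7+2)*((p*8+2)*(p*9+2))))))))))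  := by
      field_simp
      ring
    rw [hid]
    exact div_nonneg hnum hden.le
  linarith
set_option maxHeartbeats 1000000 in
theorem stmt11 (p s : ℝ) (hp : 2 ≤ p) (hs : 0 < s) :
    |(∫ r in Set.Ioi (0 : ℝ), Real.sin (s * r) * r * Real.exp (-(r ^ p))) -
        (Real.sin s - s * Real.cos s) / s ^ 2| ≤ 1.016 / p := by
  have hp0 : (0:ℝ) < p := by linarith
  have hc : Continuous (fun r : ℝ => r ^ p) :=
    continuous_iff_continuousAt.mpr (fun x => Real.continuousAt_rpow_const x p (Or.inr hp0.le))
  have hcf : Continuous (fun r : ℝ => Real.sin (s * r) * r * Real.exp (-(r ^ p))) :=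
    ((Real.continuous_sin.comp (continuous_const.mul continuous_id)).mul continuous_id).mul
      (Real.continuous_exp.comp hc.neg)
  have hg2 : IntegrableOn (fun r : ℝ => r * Real.exp (-r ^ p)) (Ioi 1) := by
    have h := integrableOn_rpow_mul_exp_neg_rpow (p := p) (s := 1) (by norm_num) (by linarith)
    refine (h.mono_set (Ioi_subset_Ioi zero_le_one)).congr_fun (fun x hx => ?_) measurableSet_Ioi
    dsimp only
    rw [Real.rpow_one]
  have hbound1 : IntegrableOn (fun r : ℝ => r * (1 - Real.exp (-r ^ p))) (Ioc 0 1) :=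
    (continuous_id.mul (continuous_const.sub (Real.continuous_exp.comp hc.neg))).integrableOn_Ioc
  have hint_Ioc : IntegrableOn (fun r : ℝ => Real.sin (s * r) * r * Real.exp (-(r ^ p))) (Ioc 0 1) :=
    hcf.integrableOn_Ioc
  have hfabs : ∀ r : ℝ, 0 < r → |Real.sin (s * r) * r * Real.exp (-(r ^ p))|
      ≤ r * Real.exp (-r ^ p) := by
    intro r hr0
    have hE : (0:ℝ) < Real.exp (-r ^ p) := Real.exp_pos _
    rw [abs_mul, abs_mul, abs_of_nonneg hE.le, abs_of_nonneg hr0.le]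
    have h1 : |Real.sin (s * r)| ≤ 1 := Real.abs_sin_le_one _
    nlinarith [mul_nonneg (mul_nonneg (sub_nonneg.mpr h1) hr0.le) hE.le]
  have hint_Ioi1 : IntegrableOn (fun r : ℝ => Real.sin (s * r) * r * Real.exp (-(r ^ p))) (Ioi 1) := by
    apply Integrable.mono hg2 hcf.aestronglyMeasurable.restrict
    filter_upwards [ae_restrict_mem measurableSet_Ioi] with r hr
    rw [Real.norm_eq_abs, Real.norm_eq_abs]
    have hr0 : (0:ℝ) < r := lt_trans one_pos hr
    calc |Real.sin (s * r) * r * Real.exp (-(r ^ p))| ≤ r * Real.exp (-r ^ p) := hfabs r hr0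
      _ ≤ |r * Real.exp (-r ^ p)| := le_abs_self _
  have hsin_int : IntegrableOn (fun r : ℝ => Real.sin (s * r) * r) (Ioc 0 1) :=
    ((Real.continuous_sin.comp (continuous_const.mul continuous_id)).mul
      continuous_id).integrableOn_Ioc
  have hsplit : (∫ r in Set.Ioi (0:ℝ), Real.sin (s * r) * r * Real.exp (-(r ^ p)))
      = (∫ r in Ioc (0:ℝ) 1, Real.sin (s * r) * r * Real.exp (-(r ^ p)))
        + ∫ r in Ioi (1:ℝ), Real.sin (s * r) * r * Real.exp (-(r ^ p)) := by
    rw [← MeasureTheory.setIntegral_union (Ioc_disjoint_Ioi le_rfl) measurableSet_Ioi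
      hint_Ioc hint_Ioi1, Ioc_union_Ioi_eq_Ioi zero_le_one]
  have hT := T_eval s hs
  have hdiff : (∫ r in Set.Ioi (0:ℝ), Real.sin (s * r) * r * Real.exp (-(r ^ p)))
      - (Real.sin s - s * Real.cos s) / s ^ 2
      = (∫ r in Ioc (0:ℝ) 1, (Real.sin (s * r) * r * Real.exp (-(r ^ p)) - Real.sin (s * r) * r))
        + ∫ r in Ioi (1:ℝ), Real.sin (s * r) * r * Real.exp (-(r ^ p)) := by
    rw [hsplit, ← hT, MeasureTheory.integral_sub hint_Ioc hsin_int]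
    ring
  have hd1 : |∫ r in Ioc (0:ℝ) 1, (Real.sin (s * r) * r * Real.exp (-(r ^ p)) - Real.sin (s * r) * r)|
      ≤ ∫ r in Ioc (0:ℝ) 1, r * (1 - Real.exp (-r ^ p)) := by
    rw [← Real.norm_eq_abs]
    refine MeasureTheory.norm_integral_le_of_norm_le hbound1 ?_
    filter_upwards [ae_restrict_mem measurableSet_Ioc] with r hr
    obtain ⟨hr0, hr1⟩ := hr
    rw [Real.norm_eq_abs]
    have hE1 : Real.exp (-r ^ p) ≤ 1 :=
      Real.exp_le_one_iff.mpr (neg_nonpos.mpr (Real.rpow_nonneg hr0.le p))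
    have hnn : (0:ℝ) ≤ r * (1 - Real.exp (-r ^ p)) := by nlinarith
    calc |Real.sin (s * r) * r * Real.exp (-(r ^ p)) - Real.sin (s * r) * r|
        = |Real.sin (s * r)| * (r * (1 - Real.exp (-r ^ p))) := by
          rw [show Real.sin (s * r) * r * Real.exp (-(r ^ p)) - Real.sin (s * r) * r
            = -(Real.sin (s * r) * (r * (1 - Real.exp (-r ^ p)))) by ring, abs_neg, abs_mul,
            abs_of_nonneg hnn]
      _ ≤ 1 * (r * (1 - Real.exp (-r ^ p))) :=
          mul_le_mul_of_nonneg_right (Real.abs_sin_le_one _) hnn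
      _ = r * (1 - Real.exp (-r ^ p)) := one_mul _
  have hd2 : |∫ r in Ioi (1:ℝ), Real.sin (s * r) * r * Real.exp (-(r ^ p))|
      ≤ ∫ r in Ioi (1:ℝ), r * Real.exp (-r ^ p) := by
    rw [← Real.norm_eq_abs]
    refine MeasureTheory.norm_integral_le_of_norm_le hg2 ?_
    filter_upwards [ae_restrict_mem measurableSet_Ioi] with r hr
    rw [Real.norm_eq_abs]
    exact hfabs r (lt_trans one_pos hr)
  rw [hdiff]
  calc |(∫ r in Ioc (0:ℝ) 1, (Real.sin (s * r) * r * Real.exp (-(r ^ p)) - Real.sin (s * r) * r))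
        + ∫ r in Ioi (1:ℝ), Real.sin (s * r) * r * Real.exp (-(r ^ p))|
      ≤ |∫ r in Ioc (0:ℝ) 1, (Real.sin (s * r) * r * Real.exp (-(r ^ p)) - Real.sin (s * r) * r)|
        + |∫ r in Ioi (1:ℝ), Real.sin (s * r) * r * Real.exp (-(r ^ p))| := abs_add_le _ _
    _ ≤ (∫ r in Ioc (0:ℝ) 1, r * (1 - Real.exp (-r ^ p)))
        + ∫ r in Ioi (1:ℝ), r * Real.exp (-r ^ p) := add_le_add hd1 hd2
    _ ≤ (((1:ℝ)/1) * (p*1+2)⁻¹ - ((1:ℝ)/2) * (p*2+2)⁻¹ + ((1:ℝ)/6) * (p*3+2)⁻¹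
        - ((1:ℝ)/24) * (p*4+2)⁻¹ + ((1:ℝ)/120) * (p*5+2)⁻¹ - ((1:ℝ)/720) * (p*6+2)⁻¹
        + ((1:ℝ)/5040) * (p*7+2)⁻¹ - ((1:ℝ)/40320) * (p*8+2)⁻¹ + ((10:ℝ)/3265920) * (p*9+2)⁻¹)
        + (((9546659248668933548393054780 : ℝ)/16008286181147388492783485089) + 2/p)
          * Real.exp (-1) / p := add_le_add (A_bound p hp) (B_bound p hp)
    _ ≤ 1.016 / p := final_ineq p hp
end

section
/- Let F_sinc(x) = λ{ s > 0 : |sin(s)/s| > x } be the distribution function (Lebesgue measure of the superlevel set) of |sin(s)/s| on (0,∞). Then for every 0 < x < 1/(2π), F_sinc(x) ≥ (2/π)·(1/x) − 27/16. -/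
open Real MeasureTheory Set

noncomputable def Hh (u : ℝ) : ℝ := u * Real.arcsin u + Real.sqrt (1 - u^2) - π/2 * u

lemma Hh_deriv {u : ℝ} (h0 : -1 < u) (h1 : u < 1) :
    HasDerivAt Hh (Real.arcsin u - π/2) u := by
  have hs : (0:ℝ) < 1 - u^2 := by nlinarith
  have hsq : Real.sqrt (1 - u^2) ≠ 0 := by positivity
  have d1 : HasDerivAt (fun u : ℝ => u * Real.arcsin u)
      (1 * Real.arcsin u + u * (1 / Real.sqrt (1 - u^2))) u :=
    (hasDerivAt_id u).mul (Real.hasDerivAt_arcsin h0.ne' h1.ne)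
  have d2 : HasDerivAt (fun u : ℝ => Real.sqrt (1 - u^2))
      ((0 - 2*u) / (2 * Real.sqrt (1 - u^2))) u := by
    have : HasDerivAt (fun u : ℝ => 1 - u^2) (0 - 2*u) u := by
      simpa using (hasDerivAt_pow 2 u).const_sub (1:ℝ)
    exact this.sqrt (by positivity)
  have d3 : HasDerivAt (fun u : ℝ => π/2 * u) (π/2) u := by
    simpa using (hasDerivAt_id u).const_mul (π/2)
  have := (d1.add d2).sub d3
  refine HasDerivAt.congr_deriv this ?_
  field_simp
  ring

lemma Hh_of_one_le {u : ℝ} (h : 1 ≤ u) : Hh u = 0 := by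
  have h1 : Real.arcsin u = π/2 := Real.arcsin_of_one_le h
  have h2 : Real.sqrt (1 - u^2) = 0 := Real.sqrt_eq_zero_of_nonpos (by nlinarith)
  simp [Hh, h1, h2]; ring

lemma Hh_cont : Continuous Hh := by
  exact ((continuous_id.mul Real.continuous_arcsin).add
    ((continuous_const.sub (continuous_pow 2)).sqrt)).sub (continuous_const.mul continuous_id)

lemma Hh_mvt {a b : ℝ} (ha : 0 < a) (hab : a < b) (hb : b ≤ 1) :
    Hh a - Hh b ≤ (b - a) * (π/2 - Real.arcsin a) := by
  obtain ⟨c, hc, hceq⟩ := exists_hasDerivAt_eq_slope Hh (fun u => Real.arcsin u - π/2) hab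
    (Hh_cont.continuousOn)
    (fun u hu => Hh_deriv (by linarith [hu.1]) (lt_of_lt_of_le hu.2 hb))
  have hba : b - a ≠ 0 := by linarith
  have h1 : Hh b - Hh a = (Real.arcsin c - π/2) * (b - a) := by
    rw [hceq, div_mul_cancel₀ _ hba]
  have h2 : Real.arcsin a ≤ Real.arcsin c := Real.monotone_arcsin hc.1.le
  nlinarith [hab]

lemma Hh_key {u h : ℝ} (hu : 0 < u) (hh : 0 < h) :
    Hh u - Hh (u + h) ≤ h * (π/2 - Real.arcsin u) := by
  rcases le_or_gt 1 u with h1 | h1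
  · rw [Hh_of_one_le h1, Hh_of_one_le (by linarith), Real.arcsin_of_one_le h1]
    simp
  rcases le_or_gt (u + h) 1 with h2 | h2
  · have := Hh_mvt hu (by linarith) h2
    nlinarith [Real.arcsin_le_pi_div_two u]
  · have := Hh_mvt hu h1 le_rfl
    rw [Hh_of_one_le (le_refl 1)] at this
    rw [Hh_of_one_le h2.le]
    nlinarith [Real.arcsin_le_pi_div_two u]


lemma sum_bound (h : ℝ) (hh : 0 < h) (hh1 : h ≤ 1) (M : ℕ) (hM : 1 ≤ (M + 1 : ℝ) * h) :
    1/h - π/2 ≤ ∑ i ∈ Finset.range M, (π/2 - Real.arcsin ((i+1 : ℝ) * h)) := by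
  have tele : ∑ i ∈ Finset.range M, (Hh ((i+1:ℝ)*h) - Hh ((i+2:ℝ)*h))
      = Hh ((0+1:ℝ)*h) - Hh ((M+1:ℝ)*h) := by
    have := Finset.sum_range_sub' (fun i => Hh ((i+1:ℝ)*h)) M
    convert this using 2 with i hi
    · push_cast; ring_nf
    · push_cast; ring_nf
  have hterm : ∀ i ∈ Finset.range M,
      (Hh ((i+1:ℝ)*h) - Hh ((i+2:ℝ)*h)) / h ≤ π/2 - Real.arcsin ((i+1:ℝ)*h) := by
    intro i _
    have hu : (0:ℝ) < (i+1:ℝ)*h := by positivity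
    have := Hh_key (u := (i+1:ℝ)*h) (h := h) hu hh
    rw [div_le_iff₀ hh]
    calc Hh ((i+1:ℝ)*h) - Hh ((i+2:ℝ)*h)
        = Hh ((i+1:ℝ)*h) - Hh ((i+1:ℝ)*h + h) := by ring_nf
      _ ≤ h * (π/2 - Real.arcsin ((i+1:ℝ)*h)) := this
      _ = (π/2 - Real.arcsin ((i+1:ℝ)*h)) * h := by ring
  have hsum : (Hh ((0+1:ℝ)*h) - Hh ((M+1:ℝ)*h)) / h
      ≤ ∑ i ∈ Finset.range M, (π/2 - Real.arcsin ((i+1:ℝ)*h)) := by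
    rw [← tele, Finset.sum_div]
    exact Finset.sum_le_sum hterm
  have hend : Hh ((M+1:ℝ)*h) = 0 := Hh_of_one_le hM
  have hstart : 1 - π/2 * h ≤ Hh ((0+1:ℝ)*h) := by
    rw [show Hh ((0+1:ℝ)*h) = ((0+1:ℝ)*h) * Real.arcsin ((0+1:ℝ)*h) + Real.sqrt (1 - ((0+1:ℝ)*h)^2) - π/2 * ((0+1:ℝ)*h) from rfl]
    have e1 : (0+1:ℝ)*h = h := by ring
    rw [e1]
    have a1 : h ≤ Real.arcsin h := by
      rw [Real.le_arcsin_iff_sin_le' ⟨by linarith [Real.pi_gt_three], by linarith [Real.pi_gt_three]⟩]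
      rcases eq_or_lt_of_le hh.le with h0 | h0
      · simp [← h0]
      · exact (Real.sin_lt h0).le
    have h1h : (0:ℝ) ≤ 1 - h^2 := by nlinarith [mul_nonneg (by linarith : (0:ℝ) ≤ 1-h) (by linarith : (0:ℝ) ≤ 1+h)]
    have a2 : 1 - h^2 ≤ Real.sqrt (1 - h^2) := by
      rw [Real.le_sqrt h1h h1h]
      nlinarith [mul_nonneg (mul_nonneg hh.le hh.le) h1h]
    nlinarith
  calc 1/h - π/2 = (1 - π/2*h) / h := by field_simp
    _ ≤ Hh ((0+1:ℝ)*h) / h := by gcongr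
    _ = (Hh ((0+1:ℝ)*h) - Hh ((M+1:ℝ)*h)) / h := by rw [hend, sub_zero]
    _ ≤ _ := hsum


noncomputable def Aset (x : ℝ) (j : ℕ) : Set ℝ :=
  if j % 2 = 1 then
    Set.Ioo (((j:ℝ)-1)*(π/2) + Real.arcsin ((j:ℝ)*(π*x/2))) ((j:ℝ)*(π/2))
  else
    Set.Ioo (((j:ℝ)-1)*(π/2)) ((j:ℝ)*(π/2) - Real.arcsin ((j:ℝ)*(π*x/2)))

lemma Aset_subset_Ioo {x : ℝ} (hx : 0 ≤ x) (j : ℕ) :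
    Aset x j ⊆ Set.Ioo (((j:ℝ)-1)*(π/2)) ((j:ℝ)*(π/2)) := by
  have ha0 : 0 ≤ Real.arcsin ((j:ℝ)*(π*x/2)) :=
    Real.arcsin_nonneg.mpr (by positivity)
  unfold Aset
  split_ifs
  · exact Set.Ioo_subset_Ioo (by linarith) le_rfl
  · exact Set.Ioo_subset_Ioo le_rfl (by linarith)

lemma Aset_volume (x : ℝ) (j : ℕ) :
    volume (Aset x j) = ENNReal.ofReal (π/2 - Real.arcsin ((j:ℝ)*(π*x/2))) := by
  unfold Aset
  split_ifs <;> rw [Real.volume_Ioo] <;> congr 1 <;> ring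

lemma Aset_subset {x : ℝ} (hx : 0 < x) (j : ℕ) (hj : 1 ≤ j) :
    Aset x j ⊆ {s : ℝ | 0 < s ∧ x < |Real.sin s / s|} := by
  set c : ℝ := (j:ℝ)*(π*x/2) with hc
  have hc0 : 0 ≤ c := by positivity
  rcases lt_or_ge 1 c with hc1 | hc1
  · have ha : Real.arcsin c = π/2 := Real.arcsin_of_one_le hc1.le
    intro s hs
    exfalso
    unfold Aset at hs
    rw [← hc] at hs
    split_ifs at hs <;> rw [ha] at hs <;> obtain ⟨h1, h2⟩ := hs <;> linarith
  · have ha0 : 0 ≤ Real.arcsin c := Real.arcsin_nonneg.mpr hc0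
    have hapi : Real.arcsin c ≤ π/2 := Real.arcsin_le_pi_div_two c
    have hsinarc : Real.sin (Real.arcsin c) = c := Real.sin_arcsin (by linarith) hc1
    have key : ∀ u : ℝ, Real.arcsin c < u → u ≤ π/2 → c < Real.sin u := by
      intro u h1 h2
      have := Real.strictMonoOn_sin ⟨by linarith, hapi⟩
        (⟨by linarith, h2⟩ : u ∈ Set.Icc (-(π/2)) (π/2)) h1
      rwa [hsinarc] at this
    intro s hs
    rcases Nat.even_or_odd j with ⟨k, hk⟩ | ⟨k, hk⟩
    · -- even case : j = k + k = 2(m+1)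
      have hmod : j % 2 = 0 := by omega
      obtain ⟨m, hm⟩ : ∃ m, k = m + 1 := ⟨k - 1, by omega⟩
      have hjr : (j:ℝ) = 2*(m:ℝ) + 2 := by
        rw [hk, hm]; push_cast; ring
      unfold Aset at hs
      rw [← hc, hmod] at hs
      simp only [if_neg (by norm_num : ¬ (0 = 1))] at hs
      obtain ⟨h1, h2⟩ := hs
      have he1 : ((j:ℝ)-1)*(π/2) = (m:ℝ)*π + π/2 := by rw [hjr]; ring
      have he2 : (j:ℝ)*(π/2) = (m:ℝ)*π + π := by rw [hjr]; ring
      rw [he1] at h1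
      rw [he2] at h2
      set t : ℝ := s - m * π with ht
      have ht1 : π/2 < t := by simp only [ht]; linarith
      have ht2 : t < π - Real.arcsin c := by simp only [ht]; linarith
      have hs0 : 0 < s := by
        have : (0:ℝ) ≤ (m:ℝ)*π := by positivity
        nlinarith [Real.pi_pos]
      have hsins : Real.sin s = (-1:ℝ)^m * Real.sin t := by
        rw [show s = t + m * π by ring, Real.sin_add_nat_mul_pi]
      have htpos : 0 < Real.sin t :=
        Real.sin_pos_of_pos_of_lt_pi (by linarith [Real.pi_pos]) (by linarith)
      have habs : |Real.sin s| = Real.sin t := by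
        rw [hsins, abs_mul, abs_pow, abs_neg, abs_one, one_pow, one_mul, abs_of_pos htpos]
      have hsint : c < Real.sin t := by
        rw [← Real.sin_pi_sub]
        exact key (π - t) (by linarith) (by linarith)
      have hxs : x * s < c := by
        calc x * s < x * ((m:ℝ)*π + π) := by nlinarith
          _ = c := by rw [hc, hjr]; ring
      refine ⟨hs0, ?_⟩
      rw [abs_div, abs_of_pos hs0, lt_div_iff₀ hs0, habs]
      linarith
    · -- odd case : j = 2k + 1
      have hmod : j % 2 = 1 := by omega
      have hjr : (j:ℝ) = 2*(k:ℝ) + 1 := by rw [hk]; push_cast; ring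
      unfold Aset at hs
      rw [← hc, hmod] at hs
      simp only [if_pos rfl] at hs
      obtain ⟨h1, h2⟩ := hs
      have he1 : ((j:ℝ)-1)*(π/2) = (k:ℝ)*π := by rw [hjr]; ring
      have he2 : (j:ℝ)*(π/2) = (k:ℝ)*π + π/2 := by rw [hjr]; ring
      rw [he1] at h1
      rw [he2] at h2
      set t : ℝ := s - k * π with ht
      have ht1 : Real.arcsin c < t := by simp only [ht]; linarith
      have ht2 : t < π/2 := by simp only [ht]; linarith
      have hs0 : 0 < s := by
        have : (0:ℝ) ≤ (k:ℝ)*π := by positivity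
        nlinarith [Real.pi_pos]
      have hsins : Real.sin s = (-1:ℝ)^k * Real.sin t := by
        rw [show s = t + k * π by ring, Real.sin_add_nat_mul_pi]
      have htpos : 0 < Real.sin t :=
        Real.sin_pos_of_pos_of_lt_pi (by linarith) (by linarith [Real.pi_pos])
      have habs : |Real.sin s| = Real.sin t := by
        rw [hsins, abs_mul, abs_pow, abs_neg, abs_one, one_pow, one_mul, abs_of_pos htpos]
      have hsint : c < Real.sin t := key t ht1 ht2.le
      have hxs : x * s < c := by
        calc x * s < x * ((k:ℝ)*π + π/2) := by nlinarith
          _ = c := by rw [hc, hjr]; ring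
      refine ⟨hs0, ?_⟩
      rw [abs_div, abs_of_pos hs0, lt_div_iff₀ hs0, habs]
      linarith

lemma Aset_meas (x : ℝ) (j : ℕ) : MeasurableSet (Aset x j) := by
  unfold Aset
  split_ifs <;> exact measurableSet_Ioo

noncomputable def Fsinc (x : ℝ) : ℝ :=
  (volume {s : ℝ | 0 < s ∧ x < |Real.sin s / s|}).toReal

theorem stmt12 (x : ℝ) (hx0 : 0 < x) (hx : x < 1 / (2 * π)) :
    (2 / π) * (1 / x) - 27 / 16 ≤ Fsinc x := by
  have hpi := Real.pi_pos
  set h : ℝ := π * x / 2 with hh_def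
  have hh : 0 < h := by positivity
  have hh1 : h ≤ 1 := by
    rw [hh_def]
    rw [lt_div_iff₀ (by positivity)] at hx
    nlinarith
  set M : ℕ := ⌈1/h⌉₊ with hM_def
  have hM : 1 ≤ (M + 1 : ℝ) * h := by
    have h1 : (1:ℝ)/h ≤ M := Nat.le_ceil _
    have : 1/h * h = 1 := by field_simp
    nlinarith
  set S : Set ℝ := {s : ℝ | 0 < s ∧ x < |Real.sin s / s|} with hS_def
  -- S has finite measure
  have hSsub : S ⊆ Set.Ioo 0 (1/x) := by
    intro s ⟨hs0, hsx⟩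
    refine ⟨hs0, ?_⟩
    have h1 : |Real.sin s / s| ≤ 1/s := by
      rw [abs_div, abs_of_pos hs0]
      gcongr
      exact abs_le.mpr ⟨Real.neg_one_le_sin s, Real.sin_le_one s⟩
    have : x < 1/s := lt_of_lt_of_le hsx h1
    rw [lt_div_iff₀ hs0] at this
    rw [lt_div_iff₀ hx0]
    linarith
  have hSfin : volume S ≠ ⊤ := by
    apply ne_top_of_le_ne_top ?_ (measure_mono hSsub)
    rw [Real.volume_Ioo]
    exact ENNReal.ofReal_ne_top
  -- the union
  have hdisj : (Finset.range M : Set ℕ).PairwiseDisjoint (fun i => Aset x (i+1)) := by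
    intro i _ i' _ hne
    have hsub1 := Aset_subset_Ioo hx0.le (i+1)
    have hsub2 := Aset_subset_Ioo hx0.le (i'+1)
    apply Set.disjoint_left.mpr
    intro s hs1 hs2
    have m1 := hsub1 hs1
    have m2 := hsub2 hs2
    simp only [Set.mem_Ioo] at m1 m2
    push_cast at m1 m2
    rcases lt_or_gt_of_ne hne with hlt | hlt
    · have : (i:ℝ) + 1 ≤ i' := by exact_mod_cast hlt
      nlinarith [m1.2, m2.1]
    · have : (i':ℝ) + 1 ≤ i := by exact_mod_cast hlt
      nlinarith [m1.1, m2.2]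
  have hvol : volume (⋃ i ∈ Finset.range M, Aset x (i+1))
      = ∑ i ∈ Finset.range M, ENNReal.ofReal (π/2 - Real.arcsin (((i:ℝ)+1)*(π*x/2))) := by
    rw [measure_biUnion_finset hdisj (fun i _ => Aset_meas x (i+1))]
    congr 1
    ext i
    rw [Aset_volume]
    push_cast
    ring_nf
  have hunion_sub : (⋃ i ∈ Finset.range M, Aset x (i+1)) ⊆ S := by
    apply Set.iUnion₂_subset
    intro i _
    exact Aset_subset hx0 (i+1) (by omega)
  have hterm_nonneg : ∀ i : ℕ, 0 ≤ π/2 - Real.arcsin (((i:ℝ)+1)*(π*x/2)) :=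
    fun i => by linarith [Real.arcsin_le_pi_div_two (((i:ℝ)+1)*(π*x/2))]
  have hle : ENNReal.ofReal (∑ i ∈ Finset.range M, (π/2 - Real.arcsin (((i:ℝ)+1)*(π*x/2))))
      ≤ volume S := by
    rw [ENNReal.ofReal_sum_of_nonneg (fun i _ => hterm_nonneg i)]
    rw [← hvol]
    exact measure_mono hunion_sub
  have hsum_le : ∑ i ∈ Finset.range M, (π/2 - Real.arcsin (((i:ℝ)+1)*(π*x/2)))
      ≤ (volume S).toReal :=
    (ENNReal.ofReal_le_iff_le_toReal hSfin).mp hle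
  have hlow := sum_bound h hh hh1 M hM
  have hsum_eq : ∑ i ∈ Finset.range M, (π/2 - Real.arcsin (((i:ℝ)+1)*(π*x/2)))
      = ∑ i ∈ Finset.range M, (π/2 - Real.arcsin (((i:ℝ)+1) * h)) := by
    apply Finset.sum_congr rfl
    intro i _
    rw [hh_def]
  have hfs : Fsinc x = (volume S).toReal := rfl
  rw [hfs]
  have h2pi : 2 / π * (1/x) = 1/h := by
    rw [hh_def]; field_simp
  have hpi2 : π/2 ≤ 27/16 := by nlinarith [Real.pi_lt_d2]
  calc (2/π) * (1/x) - 27/16 ≤ 1/h - π/2 := by rw [h2pi]; linarith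
    _ ≤ ∑ i ∈ Finset.range M, (π/2 - Real.arcsin (((i:ℝ)+1) * h)) := hlow
    _ = ∑ i ∈ Finset.range M, (π/2 - Real.arcsin (((i:ℝ)+1)*(π*x/2))) := hsum_eq.symm
    _ ≤ (volume S).toReal := hsum_le
end
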